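/- arXiv:2401.14108 — 5 statements merged into one kernel-verified Lean document; each statement's English description precedes it below -/
import Mathlib

section
/- With the same setup, the map 𝓕 satisfies the Lipschitz-type estimate ‖𝓕(U₁,h) − 𝓕(U₂,h)‖ ≤ 2ω(2ω + 4λω + γ)‖U₁ − U₂‖₂(‖U₁‖₂ + ‖U₂‖₂) for all U₁, U₂ ∈ Z and h ∈ X. -/
open Complex

/-- Wiener algebra norm: ℓ¹ norm of the Fourier coefficients. -/
noncomputable def wnorm (c : ℤ → ℂ) : ℝ := ∑' k : ℤ, ‖c k‖

/-- Weighted norm of the space Z: |c₀| + Σ_{k≠0} k²|c_k| (the k = 0 term of the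
    sum vanishes, so we sum over all of ℤ). -/
noncomputable def w2norm (c : ℤ → ℂ) : ℝ :=
  ‖c 0‖ + ∑' k : ℤ, (k : ℝ) ^ 2 * ‖c k‖

/-- The Fourier series Σ c_k e^{ikz}. -/
noncomputable def fseries (c : ℤ → ℂ) (z : ℝ) : ℂ :=
  ∑' k : ℤ, c k * Complex.exp (Complex.I * (k : ℂ) * (z : ℂ))

/-- Convolution of coefficient sequences (coefficients of the product). -/
noncomputable def fconv (c₁ c₂ : ℤ → ℂ) (k : ℤ) : ℂ := ∑' j : ℤ, c₁ j * c₂ (k - j)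

/-- Fourier coefficients of 𝓕(U,h) = −ω²((U²)″(z) − λ(U²)″(z−p) − λ(U²)″(z+p))
    − γω(U²)′(z) + h(z), where c are the coefficients of U and h those of the
    forcing. -/
noncomputable def Fcoef (om lam ga p : ℝ) (c h : ℤ → ℂ) (k : ℤ) : ℂ :=
  -(om : ℂ) ^ 2 * (-(k : ℂ) ^ 2) *
      (1 - (lam : ℂ) * Complex.exp (-(Complex.I * (k : ℂ) * (p : ℂ)))
         - (lam : ℂ) * Complex.exp (Complex.I * (k : ℂ) * (p : ℂ))) * fconv c c k
    - (ga : ℂ) * (om : ℂ) * (Complex.I * (k : ℂ)) * fconv c c k + h k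

/- ---------- auxiliary lemmas ---------- -/

private lemma cabs_sub_le (a b : ℂ) : ‖a - b‖ ≤ ‖a‖ + ‖b‖ := by
  simpa using norm_sub_le a b

private lemma cabs_add_le (a b : ℂ) : ‖a + b‖ ≤ ‖a‖ + ‖b‖ := by
  simpa using norm_add_le a b


private lemma one_le_sq_of_ne {k : ℤ} (hk : k ≠ 0) : (1 : ℝ) ≤ (k : ℝ) ^ 2 := by
  have h1 : (1 : ℤ) ≤ |k| := Int.one_le_abs hk
  have : (1 : ℝ) ≤ |(k : ℝ)| := by
    rw [← Int.cast_abs]; exact_mod_cast h1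
  nlinarith [abs_nonneg (k : ℝ), _root_.sq_abs (k : ℝ)]

private lemma abs_le_sq (k : ℤ) : |(k : ℝ)| ≤ (k : ℝ) ^ 2 := by
  rcases eq_or_ne k 0 with rfl | hk
  · simp
  · have h1 := one_le_sq_of_ne hk
    nlinarith [abs_nonneg (k : ℝ), _root_.sq_abs (k : ℝ)]

private lemma absSummable {c : ℤ → ℂ}
    (hc : Summable fun k : ℤ => (k : ℝ) ^ 2 * ‖c k‖) :
    Summable fun k : ℤ => ‖c k‖ := by
  have h0 : Summable (fun k : ℤ => if k = 0 then ‖c 0‖ else 0) := by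
    apply summable_of_ne_finset_zero (s := {0})
    intro b hb
    simp only [Finset.mem_singleton] at hb
    simp [hb]
  refine (hc.add h0).of_nonneg_of_le (fun k => norm_nonneg _) (fun k => ?_)
  by_cases hk : k = 0
  · subst hk; simp
  · have h1 := one_le_sq_of_ne hk
    have h2 := norm_nonneg (c k)
    simp only [hk, if_false, add_zero]
    nlinarith

private lemma absMulSummable {c : ℤ → ℂ}
    (hc : Summable fun k : ℤ => (k : ℝ) ^ 2 * ‖c k‖) :
    Summable fun k : ℤ => |(k : ℝ)| * ‖c k‖ :=
  hc.of_nonneg_of_le (fun k => mul_nonneg (abs_nonneg _) (norm_nonneg _))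
    (fun k => mul_le_mul_of_nonneg_right (abs_le_sq k) (norm_nonneg _))

private lemma conv_abs_summable {a b : ℤ → ℂ}
    (ha : Summable fun k : ℤ => ‖a k‖)
    (hb : Summable fun k : ℤ => ‖b k‖) (k : ℤ) :
    Summable fun j : ℤ => ‖a j‖ * ‖b (k - j)‖ := by
  refine (ha.mul_right (∑' m : ℤ, ‖b m‖)).of_nonneg_of_le
    (fun j => mul_nonneg (norm_nonneg _) (norm_nonneg _)) (fun j => ?_)
  exact mul_le_mul_of_nonneg_left (Summable.le_tsum hb _ fun _ _ => norm_nonneg _)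
    (norm_nonneg _)

private lemma conv_summable {a b : ℤ → ℂ}
    (ha : Summable fun k : ℤ => ‖a k‖)
    (hb : Summable fun k : ℤ => ‖b k‖) (k : ℤ) :
    Summable fun j : ℤ => a j * b (k - j) := by
  apply Summable.of_norm
  refine (conv_abs_summable ha hb k).congr fun j => ?_
  simp [map_mul]

private lemma conv_sub {c₁ c₂ : ℤ → ℂ}
    (h1 : Summable fun k : ℤ => ‖c₁ k‖)
    (h2 : Summable fun k : ℤ => ‖c₂ k‖) (k : ℤ) :
    fconv c₁ c₁ k - fconv c₂ c₂ k
      = fconv (fun j => c₁ j - c₂ j) (fun j => c₁ j + c₂ j) k := by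
  have h11 := conv_summable h1 h1 k
  have h12 := conv_summable h1 h2 k
  have h21 := conv_summable h2 h1 k
  have h22 := conv_summable h2 h2 k
  have hcomm : ∑' j : ℤ, c₂ j * c₁ (k - j) = ∑' j : ℤ, c₁ j * c₂ (k - j) := by
    rw [← Equiv.tsum_eq (Equiv.subLeft k) (fun j => c₂ j * c₁ (k - j))]
    refine tsum_congr fun j => ?_
    simp only [Equiv.subLeft_apply, sub_sub_cancel]
    ring
  unfold fconv
  have hexp : (fun j : ℤ => (c₁ j - c₂ j) * (c₁ (k - j) + c₂ (k - j)))
      = fun j : ℤ => (c₁ j * c₁ (k - j) + c₁ j * c₂ (k - j))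
        - (c₂ j * c₁ (k - j) + c₂ j * c₂ (k - j)) := by
    funext j; ring
  rw [hexp, Summable.tsum_sub (h11.add h12) (h21.add h22), Summable.tsum_add h11 h12, Summable.tsum_add h21 h22, hcomm]
  ring

/-- The shear equivalence (j, l) ↦ (j + l, j) of ℤ × ℤ. -/
private def shear : ℤ × ℤ ≃ ℤ × ℤ where
  toFun p := (p.1 + p.2, p.1)
  invFun q := (q.2, q.1 - q.2)
  left_inv p := by simp
  right_inv q := by simp

private lemma tsum_prod_mul {f g : ℤ → ℝ} (hf : Summable f) (hg : Summable g)
    (hf0 : ∀ i, 0 ≤ f i) (hg0 : ∀ i, 0 ≤ g i) :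
    ∑' p : ℤ × ℤ, f p.1 * g p.2 = (∑' i, f i) * (∑' i, g i) :=
  (Summable.tsum_mul_tsum hf hg (hf.mul_of_nonneg hg hf0 hg0)).symm

set_option maxHeartbeats 2000000 in
/-- ‖𝓕(U₁,h) − 𝓕(U₂,h)‖ ≤ 2ω(2ω+4λω+γ)‖U₁−U₂‖₂(‖U₁‖₂+‖U₂‖₂). -/
theorem stmt_6 (om lam ga p : ℝ) (hom : 0 < om) (hlam : 0 < lam) (hga : 0 ≤ ga)
    (c₁ c₂ h : ℤ → ℂ)
    (hc₁ : Summable fun k : ℤ => (k : ℝ) ^ 2 * ‖c₁ k‖)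
    (hc₂ : Summable fun k : ℤ => (k : ℝ) ^ 2 * ‖c₂ k‖)
    (hh : Summable fun k : ℤ => ‖h k‖) :
    wnorm (fun k => Fcoef om lam ga p c₁ h k - Fcoef om lam ga p c₂ h k) ≤
      2 * om * (2 * om + 4 * lam * om + ga) *
        w2norm (fun k => c₁ k - c₂ k) * (w2norm c₁ + w2norm c₂) := by
  classical
  set d : ℤ → ℂ := fun k => c₁ k - c₂ k with hd_def
  set s : ℤ → ℂ := fun k => c₁ k + c₂ k with hs_def
  -- summability facts
  have hQd : Summable fun k : ℤ => (k : ℝ) ^ 2 * ‖d k‖ := by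
    refine (hc₁.add hc₂).of_nonneg_of_le
      (fun k => mul_nonneg (sq_nonneg _) (norm_nonneg _)) (fun k => ?_)
    have : ‖d k‖ ≤ ‖c₁ k‖ + ‖c₂ k‖ := by
      simpa [hd_def] using cabs_sub_le (c₁ k) (c₂ k)
    calc (k : ℝ) ^ 2 * ‖d k‖
        ≤ (k : ℝ) ^ 2 * (‖c₁ k‖ + ‖c₂ k‖) :=
          mul_le_mul_of_nonneg_left this (sq_nonneg _)
      _ = (k : ℝ) ^ 2 * ‖c₁ k‖ + (k : ℝ) ^ 2 * ‖c₂ k‖ := by ring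
  have hQs : Summable fun k : ℤ => (k : ℝ) ^ 2 * ‖s k‖ := by
    refine (hc₁.add hc₂).of_nonneg_of_le
      (fun k => mul_nonneg (sq_nonneg _) (norm_nonneg _)) (fun k => ?_)
    have : ‖s k‖ ≤ ‖c₁ k‖ + ‖c₂ k‖ := by
      simpa [hs_def] using cabs_add_le (c₁ k) (c₂ k)
    calc (k : ℝ) ^ 2 * ‖s k‖
        ≤ (k : ℝ) ^ 2 * (‖c₁ k‖ + ‖c₂ k‖) :=
          mul_le_mul_of_nonneg_left this (sq_nonneg _)
      _ = (k : ℝ) ^ 2 * ‖c₁ k‖ + (k : ℝ) ^ 2 * ‖c₂ k‖ := by ring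
  have hA1 := absSummable hc₁
  have hA2 := absSummable hc₂
  have hAd := absSummable hQd
  have hAs := absSummable hQs
  have hLd := absMulSummable hQd
  have hLs := absMulSummable hQs
  -- the multiplier
  set M : ℤ → ℂ := fun k =>
    -(om : ℂ) ^ 2 * (-(k : ℂ) ^ 2) *
        (1 - (lam : ℂ) * Complex.exp (-(Complex.I * (k : ℂ) * (p : ℂ)))
           - (lam : ℂ) * Complex.exp (Complex.I * (k : ℂ) * (p : ℂ)))
      - (ga : ℂ) * (om : ℂ) * (Complex.I * (k : ℂ)) with hM_def
  set B : ℤ → ℝ := fun k =>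
    ((1 + 2 * lam) * om ^ 2) * (k : ℝ) ^ 2 + (ga * om) * |(k : ℝ)| with hB_def
  have hB0 : ∀ k, 0 ≤ B k := fun k => add_nonneg
    (mul_nonneg (mul_nonneg (by linarith) (sq_nonneg _)) (sq_nonneg _))
    (mul_nonneg (mul_nonneg hga hom.le) (abs_nonneg _))
  have hM : ∀ k : ℤ, ‖M k‖ ≤ B k := by
    intro k
    have he1 : ‖Complex.exp (-(Complex.I * (k : ℂ) * (p : ℂ)))‖ = 1 := by
      have : -(Complex.I * (k : ℂ) * (p : ℂ)) = ((-(k * p) : ℝ) : ℂ) * Complex.I := by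
        push_cast; ring
      rw [this, Complex.norm_exp_ofReal_mul_I]
    have he2 : ‖Complex.exp (Complex.I * (k : ℂ) * (p : ℂ))‖ = 1 := by
      have : Complex.I * (k : ℂ) * (p : ℂ) = (((k * p) : ℝ) : ℂ) * Complex.I := by
        push_cast; ring
      rw [this, Complex.norm_exp_ofReal_mul_I]
    have hbr : ‖1 - (lam : ℂ) * Complex.exp (-(Complex.I * (k : ℂ) * (p : ℂ)))
           - (lam : ℂ) * Complex.exp (Complex.I * (k : ℂ) * (p : ℂ))‖ ≤ 1 + 2 * lam := by
      calc ‖1 - (lam : ℂ) * Complex.exp (-(Complex.I * (k : ℂ) * (p : ℂ)))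
              - (lam : ℂ) * Complex.exp (Complex.I * (k : ℂ) * (p : ℂ))‖
          ≤ ‖1 - (lam : ℂ) * Complex.exp (-(Complex.I * (k : ℂ) * (p : ℂ)))‖
            + ‖(lam : ℂ) * Complex.exp (Complex.I * (k : ℂ) * (p : ℂ))‖ :=
            cabs_sub_le _ _
        _ ≤ (‖(1 : ℂ)‖
              + ‖(lam : ℂ) * Complex.exp (-(Complex.I * (k : ℂ) * (p : ℂ)))‖)
            + ‖(lam : ℂ) * Complex.exp (Complex.I * (k : ℂ) * (p : ℂ))‖ :=
            add_le_add_left (cabs_sub_le _ _) _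
        _ = 1 + 2 * lam := by
            rw [norm_mul, norm_mul, he1, he2]
            simp [_root_.abs_of_pos hlam]
            ring
    calc ‖M k‖
        ≤ ‖-(om : ℂ) ^ 2 * (-(k : ℂ) ^ 2) *
            (1 - (lam : ℂ) * Complex.exp (-(Complex.I * (k : ℂ) * (p : ℂ)))
               - (lam : ℂ) * Complex.exp (Complex.I * (k : ℂ) * (p : ℂ)))‖
          + ‖(ga : ℂ) * (om : ℂ) * (Complex.I * (k : ℂ))‖ :=
          cabs_sub_le _ _
      _ ≤ (om ^ 2 * (k : ℝ) ^ 2) * (1 + 2 * lam) + ga * om * |(k : ℝ)| := by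
          apply add_le_add
          · rw [norm_mul, norm_mul]
            have h1 : ‖-(om : ℂ) ^ 2‖ = om ^ 2 := by
              rw [norm_neg, norm_pow, Complex.norm_real, Real.norm_eq_abs, _root_.abs_of_pos hom]
            have h2 : ‖-(k : ℂ) ^ 2‖ = (k : ℝ) ^ 2 := by
              rw [norm_neg, norm_pow, Complex.norm_intCast, _root_.sq_abs]
            rw [h1, h2]
            exact mul_le_mul_of_nonneg_left hbr
              (mul_nonneg (sq_nonneg _) (sq_nonneg _))
          · rw [norm_mul, norm_mul, norm_mul, Complex.norm_I, one_mul,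
              Complex.norm_real, Real.norm_eq_abs, Complex.norm_real, Real.norm_eq_abs, Complex.norm_intCast,
              _root_.abs_of_nonneg hga, _root_.abs_of_pos hom]
      _ = B k := by simp only [hB_def]; ring
  -- pointwise difference identity
  have hΔ : ∀ k : ℤ, Fcoef om lam ga p c₁ h k - Fcoef om lam ga p c₂ h k
      = M k * fconv d s k := by
    intro k
    have hcs := conv_sub hA1 hA2 k
    rw [hd_def, hs_def, hM_def, ← hcs]
    unfold Fcoef
    ring
  -- the abs convolution and its bound
  set g : ℤ → ℝ := fun k => ∑' j : ℤ, ‖d j‖ * ‖s (k - j)‖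
    with hg_def
  have hg0 : ∀ k, 0 ≤ g k := fun k =>
    tsum_nonneg fun j => mul_nonneg (norm_nonneg _) (norm_nonneg _)
  have hconv_le : ∀ k : ℤ, ‖fconv d s k‖ ≤ g k := by
    intro k
    have hsum : Summable fun j : ℤ => ‖d j * s (k - j)‖ := by
      refine (conv_abs_summable hAd hAs k).congr fun j => ?_
      simp [map_mul]
    calc ‖fconv d s k‖ = ‖∑' j : ℤ, d j * s (k - j)‖ := by
          rfl
      _ ≤ ∑' j : ℤ, ‖d j * s (k - j)‖ := norm_tsum_le_tsum_norm hsum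
      _ = g k := tsum_congr fun j => by simp [map_mul]
  -- the big double sum
  set H : ℤ × ℤ → ℝ := fun q =>
    B (q.1 + q.2) * (‖d q.1‖ * ‖s q.2‖) with hH_def
  -- instead of G, directly build the four summable pieces
  have hT1 : Summable fun q : ℤ × ℤ =>
      (2 * (1 + 2 * lam) * om ^ 2 * ((q.1 : ℝ) ^ 2 * ‖d q.1‖))
        * ‖s q.2‖ :=
    Summable.mul_of_nonneg
      (f := fun j : ℤ => 2 * (1 + 2 * lam) * om ^ 2 * ((j : ℝ) ^ 2 * ‖d j‖))
      (g := fun l : ℤ => ‖s l‖) (hQd.mul_left _) hAs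
      (fun j => mul_nonneg (mul_nonneg (mul_nonneg (by linarith) (by linarith)) (sq_nonneg om))
        (mul_nonneg (sq_nonneg _) (norm_nonneg _)))
      (fun l => norm_nonneg _)
  have hT2 : Summable fun q : ℤ × ℤ =>
      (2 * (1 + 2 * lam) * om ^ 2 * ‖d q.1‖)
        * ((q.2 : ℝ) ^ 2 * ‖s q.2‖) :=
    Summable.mul_of_nonneg
      (f := fun j : ℤ => 2 * (1 + 2 * lam) * om ^ 2 * ‖d j‖)
      (g := fun l : ℤ => (l : ℝ) ^ 2 * ‖s l‖) (hAd.mul_left _) hQs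
      (fun j => mul_nonneg (mul_nonneg (mul_nonneg (by linarith) (by linarith)) (sq_nonneg om))
        (norm_nonneg _))
      (fun l => mul_nonneg (sq_nonneg _) (norm_nonneg _))
  have hT3 : Summable fun q : ℤ × ℤ =>
      (ga * om * (|(q.1 : ℝ)| * ‖d q.1‖)) * ‖s q.2‖ :=
    Summable.mul_of_nonneg
      (f := fun j : ℤ => ga * om * (|(j : ℝ)| * ‖d j‖))
      (g := fun l : ℤ => ‖s l‖) (hLd.mul_left _) hAs
      (fun j => mul_nonneg (mul_nonneg hga hom.le)
        (mul_nonneg (abs_nonneg _) (norm_nonneg _)))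
      (fun l => norm_nonneg _)
  have hT4 : Summable fun q : ℤ × ℤ =>
      (ga * om * ‖d q.1‖) * (|(q.2 : ℝ)| * ‖s q.2‖) :=
    Summable.mul_of_nonneg
      (f := fun j : ℤ => ga * om * ‖d j‖)
      (g := fun l : ℤ => |(l : ℝ)| * ‖s l‖) (hAd.mul_left _) hLs
      (fun j => mul_nonneg (mul_nonneg hga hom.le) (norm_nonneg _))
      (fun l => mul_nonneg (abs_nonneg _) (norm_nonneg _))
  have hGsum := ((hT1.add hT2).add hT3).add hT4
  have hHleG : ∀ q : ℤ × ℤ, H q ≤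
      ((2 * (1 + 2 * lam) * om ^ 2 * ((q.1 : ℝ) ^ 2 * ‖d q.1‖))
          * ‖s q.2‖
        + (2 * (1 + 2 * lam) * om ^ 2 * ‖d q.1‖)
          * ((q.2 : ℝ) ^ 2 * ‖s q.2‖)
        + (ga * om * (|(q.1 : ℝ)| * ‖d q.1‖)) * ‖s q.2‖)
        + (ga * om * ‖d q.1‖) * (|(q.2 : ℝ)| * ‖s q.2‖) := by
    rintro ⟨j, l⟩
    simp only [hH_def, hB_def]
    have hsq : ((j + l : ℤ) : ℝ) ^ 2 ≤ 2 * ((j : ℝ) ^ 2 + (l : ℝ) ^ 2) := by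
      push_cast
      nlinarith [sq_nonneg ((j : ℝ) - (l : ℝ))]
    have habs : |((j + l : ℤ) : ℝ)| ≤ |(j : ℝ)| + |(l : ℝ)| := by
      push_cast
      exact abs_add_le _ _
    have hP : (0 : ℝ) ≤ ‖d j‖ * ‖s l‖ :=
      mul_nonneg (norm_nonneg _) (norm_nonneg _)
    have hc1 : (0 : ℝ) ≤ (1 + 2 * lam) * om ^ 2 := by nlinarith [sq_nonneg om]
    have hc2 : (0 : ℝ) ≤ ga * om := mul_nonneg hga hom.le
    have key : (((1 + 2 * lam) * om ^ 2) * ((j + l : ℤ) : ℝ) ^ 2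
          + (ga * om) * |((j + l : ℤ) : ℝ)|) * (‖d j‖ * ‖s l‖)
        ≤ (((1 + 2 * lam) * om ^ 2) * (2 * ((j : ℝ) ^ 2 + (l : ℝ) ^ 2))
          + (ga * om) * (|(j : ℝ)| + |(l : ℝ)|)) * (‖d j‖ * ‖s l‖) := by
      apply mul_le_mul_of_nonneg_right _ hP
      exact add_le_add (mul_le_mul_of_nonneg_left hsq hc1)
        (mul_le_mul_of_nonneg_left habs hc2)
    calc ((1 + 2 * lam) * om ^ 2 * ((j + l : ℤ) : ℝ) ^ 2
          + ga * om * |((j + l : ℤ) : ℝ)|) * (‖d j‖ * ‖s l‖)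
        ≤ (((1 + 2 * lam) * om ^ 2) * (2 * ((j : ℝ) ^ 2 + (l : ℝ) ^ 2))
          + (ga * om) * (|(j : ℝ)| + |(l : ℝ)|))
            * (‖d j‖ * ‖s l‖) := key
      _ = (2 * (1 + 2 * lam) * om ^ 2 * ((j : ℝ) ^ 2 * ‖d j‖))
            * ‖s l‖
          + (2 * (1 + 2 * lam) * om ^ 2 * ‖d j‖)
            * ((l : ℝ) ^ 2 * ‖s l‖)
          + (ga * om * (|(j : ℝ)| * ‖d j‖)) * ‖s l‖
          + (ga * om * ‖d j‖) * (|(l : ℝ)| * ‖s l‖) := by ring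
  have hH0 : ∀ q : ℤ × ℤ, 0 ≤ H q := fun q =>
    mul_nonneg (hB0 _) (mul_nonneg (norm_nonneg _) (norm_nonneg _))
  have hHsum : Summable H := hGsum.of_nonneg_of_le hH0 hHleG
  -- transfer through the shear equivalence
  set K : ℤ × ℤ → ℝ := fun q => B q.1 * (‖d q.2‖ * ‖s (q.1 - q.2)‖)
    with hK_def
  have hKeq : ∀ q : ℤ × ℤ, H (shear.symm q) = K q := by
    rintro ⟨k, j⟩
    simp only [hH_def, hK_def, shear, Equiv.coe_fn_symm_mk]
    rw [add_sub_cancel]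
  have hKsum : Summable K := by
    have := (Equiv.summable_iff shear.symm).mpr hHsum
    exact this.congr hKeq
  have htsumK : ∑' q : ℤ × ℤ, K q = ∑' q : ℤ × ℤ, H q := by
    rw [← Equiv.tsum_eq shear.symm H]
    exact tsum_congr fun q => (hKeq q).symm
  have hKinner : ∀ k : ℤ, Summable fun j : ℤ => K (k, j) := fun k =>
    ((conv_abs_summable hAd hAs k).mul_left (B k)).congr fun j => rfl
  have hfib : HasSum (fun k : ℤ => ∑' j : ℤ, K (k, j)) (∑' q : ℤ × ℤ, K q) :=
    hKsum.hasSum.prod_fiberwise fun k => (hKinner k).hasSum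
  have hKrow : ∀ k : ℤ, ∑' j : ℤ, K (k, j) = B k * g k := by
    intro k
    simp only [hK_def, hg_def]
    rw [tsum_mul_left]
  have hBg : HasSum (fun k : ℤ => B k * g k) (∑' q : ℤ × ℤ, K q) := by
    refine hfib.congr_fun ?_  -- maybe not a lemma; use hasSum congr
    intro k
    exact (hKrow k).symm
  have hBgsum : Summable fun k : ℤ => B k * g k := hBg.summable
  have hBgval : ∑' k : ℤ, B k * g k = ∑' q : ℤ × ℤ, K q := hBg.tsum_eq
  -- main chain
  have hterm : ∀ k : ℤ, ‖Fcoef om lam ga p c₁ h k - Fcoef om lam ga p c₂ h k‖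
      ≤ B k * g k := by
    intro k
    rw [hΔ k, norm_mul]
    exact mul_le_mul (hM k) (hconv_le k) (norm_nonneg _) (hB0 k)
  have hmain : wnorm (fun k => Fcoef om lam ga p c₁ h k - Fcoef om lam ga p c₂ h k)
      ≤ ∑' k : ℤ, B k * g k := by
    unfold wnorm
    refine Summable.tsum_le_tsum hterm ?_ hBgsum
    exact hBgsum.of_nonneg_of_le (fun k => norm_nonneg _) hterm
  -- compute the tsum of the four pieces
  set Ad := ∑' k : ℤ, ‖d k‖ with hAd_def
  set As := ∑' k : ℤ, ‖s k‖ with hAs_def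
  set Qd := ∑' k : ℤ, (k : ℝ) ^ 2 * ‖d k‖ with hQd_def
  set Qs := ∑' k : ℤ, (k : ℝ) ^ 2 * ‖s k‖ with hQs_def
  set Ld := ∑' k : ℤ, |(k : ℝ)| * ‖d k‖ with hLd_def
  set Ls := ∑' k : ℤ, |(k : ℝ)| * ‖s k‖ with hLs_def
  have hGval : ∑' q : ℤ × ℤ,
      ((2 * (1 + 2 * lam) * om ^ 2 * ((q.1 : ℝ) ^ 2 * ‖d q.1‖))
          * ‖s q.2‖
        + (2 * (1 + 2 * lam) * om ^ 2 * ‖d q.1‖)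
          * ((q.2 : ℝ) ^ 2 * ‖s q.2‖)
        + (ga * om * (|(q.1 : ℝ)| * ‖d q.1‖)) * ‖s q.2‖
        + (ga * om * ‖d q.1‖) * (|(q.2 : ℝ)| * ‖s q.2‖))
      = 2 * (1 + 2 * lam) * om ^ 2 * (Qd * As) + 2 * (1 + 2 * lam) * om ^ 2 * (Ad * Qs)
        + ga * om * (Ld * As) + ga * om * (Ad * Ls) := by
    rw [show (fun q : ℤ × ℤ =>
      (2 * (1 + 2 * lam) * om ^ 2 * ((q.1 : ℝ) ^ 2 * ‖d q.1‖))
          * ‖s q.2‖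
        + (2 * (1 + 2 * lam) * om ^ 2 * ‖d q.1‖)
          * ((q.2 : ℝ) ^ 2 * ‖s q.2‖)
        + (ga * om * (|(q.1 : ℝ)| * ‖d q.1‖)) * ‖s q.2‖
        + (ga * om * ‖d q.1‖) * (|(q.2 : ℝ)| * ‖s q.2‖))
      = (fun q : ℤ × ℤ =>
        ((2 * (1 + 2 * lam) * om ^ 2 * ((q.1 : ℝ) ^ 2 * ‖d q.1‖))
          * ‖s q.2‖
        + (2 * (1 + 2 * lam) * om ^ 2 * ‖d q.1‖)
          * ((q.2 : ℝ) ^ 2 * ‖s q.2‖)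
        + (ga * om * (|(q.1 : ℝ)| * ‖d q.1‖)) * ‖s q.2‖)
        + (ga * om * ‖d q.1‖) * (|(q.2 : ℝ)| * ‖s q.2‖)) from rfl]
    rw [Summable.tsum_add ((hT1.add hT2).add hT3) hT4, Summable.tsum_add (hT1.add hT2) hT3, Summable.tsum_add hT1 hT2]
    rw [tsum_prod_mul
        (f := fun j : ℤ => 2 * (1 + 2 * lam) * om ^ 2 * ((j : ℝ) ^ 2 * ‖d j‖))
        (g := fun l : ℤ => ‖s l‖) (hQd.mul_left _) hAs
        (fun j => mul_nonneg (mul_nonneg (mul_nonneg (by linarith) (by linarith)) (sq_nonneg om))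
          (mul_nonneg (sq_nonneg _) (norm_nonneg _)))
        (fun l => norm_nonneg _),
      tsum_prod_mul
        (f := fun j : ℤ => 2 * (1 + 2 * lam) * om ^ 2 * ‖d j‖)
        (g := fun l : ℤ => (l : ℝ) ^ 2 * ‖s l‖) (hAd.mul_left _) hQs
        (fun j => mul_nonneg (mul_nonneg (mul_nonneg (by linarith) (by linarith)) (sq_nonneg om))
          (norm_nonneg _))
        (fun l => mul_nonneg (sq_nonneg _) (norm_nonneg _)),
      tsum_prod_mul
        (f := fun j : ℤ => ga * om * (|(j : ℝ)| * ‖d j‖))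
        (g := fun l : ℤ => ‖s l‖) (hLd.mul_left _) hAs
        (fun j => mul_nonneg (mul_nonneg hga hom.le)
          (mul_nonneg (abs_nonneg _) (norm_nonneg _)))
        (fun l => norm_nonneg _),
      tsum_prod_mul
        (f := fun j : ℤ => ga * om * ‖d j‖)
        (g := fun l : ℤ => |(l : ℝ)| * ‖s l‖) (hAd.mul_left _) hLs
        (fun j => mul_nonneg (mul_nonneg hga hom.le) (norm_nonneg _))
        (fun l => mul_nonneg (abs_nonneg _) (norm_nonneg _)),
      tsum_mul_left, tsum_mul_left, tsum_mul_left, tsum_mul_left]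
    ring
  have hHleGsum : ∑' q : ℤ × ℤ, H q ≤
      2 * (1 + 2 * lam) * om ^ 2 * (Qd * As) + 2 * (1 + 2 * lam) * om ^ 2 * (Ad * Qs)
        + ga * om * (Ld * As) + ga * om * (Ad * Ls) := by
    rw [← hGval]
    exact Summable.tsum_le_tsum hHleG hHsum hGsum
  -- norm comparisons
  have hW : ∀ (c : ℤ → ℂ), Summable (fun k : ℤ => (k : ℝ) ^ 2 * ‖c k‖) →
      (∑' k : ℤ, ‖c k‖) ≤ w2norm c := by
    intro c hQc
    have hAc := absSummable hQc
    have hite : Summable fun k : ℤ => if k = 0 then (0 : ℝ) else ‖c k‖ := by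
      refine hQc.of_nonneg_of_le (fun k => by positivity) (fun k => ?_)
      by_cases hk : k = 0
      · simp [hk]
      · have := one_le_sq_of_ne hk
        have := norm_nonneg (c k)
        simp only [hk, if_false]
        nlinarith
    rw [Summable.tsum_eq_add_tsum_ite hAc 0]
    unfold w2norm
    apply add_le_add_right
    refine Summable.tsum_le_tsum (fun k => ?_) hite hQc
    by_cases hk : k = 0
    · simp [hk]
    · have := one_le_sq_of_ne hk
      have := norm_nonneg (c k)
      simp only [hk, if_false]
      nlinarith
  have hWnn : ∀ c : ℤ → ℂ, 0 ≤ w2norm c := by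
    intro c
    unfold w2norm
    have : 0 ≤ ∑' k : ℤ, (k : ℝ) ^ 2 * ‖c k‖ :=
      tsum_nonneg fun k => mul_nonneg (sq_nonneg _) (norm_nonneg _)
    have := norm_nonneg (c 0)
    linarith
  have hQleW : ∀ c : ℤ → ℂ, (∑' k : ℤ, (k : ℝ) ^ 2 * ‖c k‖) ≤ w2norm c := by
    intro c
    unfold w2norm
    have := norm_nonneg (c 0)
    linarith
  have hLleW : ∀ (c : ℤ → ℂ), Summable (fun k : ℤ => (k : ℝ) ^ 2 * ‖c k‖) →
      (∑' k : ℤ, |(k : ℝ)| * ‖c k‖) ≤ w2norm c := by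
    intro c hQc
    refine le_trans (Summable.tsum_le_tsum (fun k =>
      mul_le_mul_of_nonneg_right (abs_le_sq k) (norm_nonneg _))
      (absMulSummable hQc) hQc) (hQleW c)
  have hAdW : Ad ≤ w2norm d := hW d hQd
  have hAsW : As ≤ w2norm s := hW s hQs
  have hQdW : Qd ≤ w2norm d := hQleW d
  have hQsW : Qs ≤ w2norm s := hQleW s
  have hLdW : Ld ≤ w2norm d := hLleW d hQd
  have hLsW : Ls ≤ w2norm s := hLleW s hQs
  have hWsle : w2norm s ≤ w2norm c₁ + w2norm c₂ := by
    unfold w2norm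
    have h0 : ‖s 0‖ ≤ ‖c₁ 0‖ + ‖c₂ 0‖ := by
      simpa [hs_def] using cabs_add_le (c₁ 0) (c₂ 0)
    have hQ : (∑' k : ℤ, (k : ℝ) ^ 2 * ‖s k‖)
        ≤ ∑' k : ℤ, ((k : ℝ) ^ 2 * ‖c₁ k‖ + (k : ℝ) ^ 2 * ‖c₂ k‖) := by
      refine Summable.tsum_le_tsum (fun k => ?_) hQs (hc₁.add hc₂)
      have : ‖s k‖ ≤ ‖c₁ k‖ + ‖c₂ k‖ := by
        simpa [hs_def] using cabs_add_le (c₁ k) (c₂ k)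
      nlinarith [sq_nonneg (k : ℝ)]
    rw [Summable.tsum_add hc₁ hc₂] at hQ
    linarith
  -- nonnegativity of the ℓ¹-type sums
  have hAdnn : 0 ≤ Ad := tsum_nonneg fun k => norm_nonneg _
  have hAsnn : 0 ≤ As := tsum_nonneg fun k => norm_nonneg _
  have hQdnn : 0 ≤ Qd := tsum_nonneg fun k => mul_nonneg (sq_nonneg _) (norm_nonneg _)
  have hQsnn : 0 ≤ Qs := tsum_nonneg fun k => mul_nonneg (sq_nonneg _) (norm_nonneg _)
  have hLdnn : 0 ≤ Ld := tsum_nonneg fun k => mul_nonneg (abs_nonneg _) (norm_nonneg _)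
  have hLsnn : 0 ≤ Ls := tsum_nonneg fun k => mul_nonneg (abs_nonneg _) (norm_nonneg _)
  have hWd := hWnn d
  have hWs := hWnn s
  -- put everything together
  have hbig : ∑' q : ℤ × ℤ, H q ≤
      2 * om * (2 * om + 4 * lam * om + ga) * w2norm d * w2norm s := by
    refine le_trans hHleGsum ?_
    have h1 : Qd * As ≤ w2norm d * w2norm s :=
      mul_le_mul hQdW hAsW hAsnn hWd
    have h2 : Ad * Qs ≤ w2norm d * w2norm s :=
      mul_le_mul hAdW hQsW hQsnn hWd
    have h3 : Ld * As ≤ w2norm d * w2norm s :=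
      mul_le_mul hLdW hAsW hAsnn hWd
    have h4 : Ad * Ls ≤ w2norm d * w2norm s :=
      mul_le_mul hAdW hLsW hLsnn hWd
    have hc1 : (0 : ℝ) ≤ 2 * (1 + 2 * lam) * om ^ 2 := by nlinarith [sq_nonneg om]
    have hc2 : (0 : ℝ) ≤ ga * om := mul_nonneg hga hom.le
    nlinarith [mul_le_mul_of_nonneg_left h1 hc1, mul_le_mul_of_nonneg_left h2 hc1,
      mul_le_mul_of_nonneg_left h3 hc2, mul_le_mul_of_nonneg_left h4 hc2]
  calc wnorm (fun k => Fcoef om lam ga p c₁ h k - Fcoef om lam ga p c₂ h k)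
      ≤ ∑' k : ℤ, B k * g k := hmain
    _ = ∑' q : ℤ × ℤ, K q := hBgval
    _ = ∑' q : ℤ × ℤ, H q := htsumK
    _ ≤ 2 * om * (2 * om + 4 * lam * om + ga) * w2norm d * w2norm s := hbig
    _ ≤ 2 * om * (2 * om + 4 * lam * om + ga) * w2norm d * (w2norm c₁ + w2norm c₂) := by
        have hconst : (0:ℝ) ≤ 2 * om * (2 * om + 4 * lam * om + ga) := by nlinarith
        exact mul_le_mul_of_nonneg_left hWsle (mul_nonneg hconst hWd)
end

section
/- (Existence of small periodic travelling waves.) Assume Θ > 0 (as defined via the multiplier m(k)) and 0 < ‖h‖ < Θ²/(8ω(2ω+4λω+γ)). Then the equation 𝒦U = 𝓕(U,h) has a unique solution U(h) in the closed ball B(ρ_h) = {U ∈ Z : ‖U‖₂ ≤ ρ_h}, where ρ_h = (Θ − √(Θ² − 8ω(2ω+4λω+γ)‖h‖))/(4ω(2ω+4λω+γ)). Moreover, the map 𝓡(·,h) = 𝒦⁻¹𝓕(·,h) is a contraction on B(ρ_h) with contraction constant 4ω(2ω+4λω+γ)ρ_h/Θ < 1. -/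
open Complex

/-- Fourier multiplier symbol of the operator 𝒦:
    m(k) = 1 − ω²k² + 2λω²k²cos(kp) + iγωk. -/
noncomputable def msym (om lam ga p : ℝ) (k : ℤ) : ℂ :=
  1 - (om : ℂ) ^ 2 * (k : ℂ) ^ 2
    + 2 * (lam : ℂ) * (om : ℂ) ^ 2 * (k : ℂ) ^ 2 * (Real.cos (k * p) : ℂ)
    + Complex.I * (ga : ℂ) * (om : ℂ) * (k : ℂ)


namespace Stmt10

noncomputable def wt (k : ℤ) : ℝ := if k = 0 then 1 else (k : ℝ) ^ 2

lemma one_le_wt (k : ℤ) : 1 ≤ wt k := by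
  unfold wt
  split
  · exact le_refl 1
  · next h =>
    have h1 : (1:ℝ) ≤ |(k:ℝ)| := by
      rw [← Int.cast_abs]
      exact_mod_cast Int.one_le_abs (by exact_mod_cast h)
    nlinarith [abs_nonneg ((k:ℝ)), _root_.sq_abs (k:ℝ)]

lemma wt_pos (k : ℤ) : 0 < wt k := lt_of_lt_of_le one_pos (one_le_wt k)

lemma sq_le_wt (k : ℤ) : (k : ℝ) ^ 2 ≤ wt k := by
  unfold wt; split
  · next h => simp [h]
  · exact le_refl _

lemma abs_le_wt (k : ℤ) : |(k : ℝ)| ≤ wt k := by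
  unfold wt; split
  · next h => simp [h]
  · next h =>
    have h1 : (1:ℝ) ≤ |(k:ℝ)| := by
      rw [← Int.cast_abs]
      exact_mod_cast Int.one_le_abs (by exact_mod_cast h)
    nlinarith [abs_nonneg ((k:ℝ)), _root_.sq_abs (k:ℝ)]

/-- the auxiliary finite-support part -/
lemma summable_ite_zero (x : ℝ) : Summable (fun k : ℤ => if k = 0 then x else 0) := by
  apply summable_of_ne_finset_zero (s := {0})
  intro k hk
  simp at hk
  simp [hk]

lemma wt_mul_split (c : ℤ → ℂ) (k : ℤ) :
    wt k * ‖c k‖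
      = (k : ℝ) ^ 2 * ‖c k‖ + (if k = 0 then ‖c 0‖ else 0) := by
  by_cases h : k = 0 <;> simp [wt, h]

lemma summW_iff (c : ℤ → ℂ) :
    Summable (fun k => wt k * ‖c k‖) ↔
      Summable (fun k : ℤ => (k : ℝ) ^ 2 * ‖c k‖) := by
  constructor
  · intro H
    have := H.sub (summable_ite_zero (‖c 0‖))
    refine this.congr fun k => ?_
    rw [wt_mul_split]; ring
  · intro H
    have := H.add (summable_ite_zero (‖c 0‖))
    refine this.congr fun k => ?_
    rw [wt_mul_split]

lemma w2norm_eq (c : ℤ → ℂ) (hc : Summable (fun k : ℤ => (k : ℝ) ^ 2 * ‖c k‖)) :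
    w2norm c = ∑' k, wt k * ‖c k‖ := by
  have h2 : (∑' k, wt k * ‖c k‖)
      = (∑' k : ℤ, (k:ℝ)^2 * ‖c k‖) + ∑' k : ℤ, (if k = 0 then ‖c 0‖ else 0) := by
    rw [← Summable.tsum_add hc (summable_ite_zero _)]
    exact tsum_congr fun k => wt_mul_split c k
  rw [w2norm, h2, tsum_ite_eq (0:ℤ) (fun _ => ‖c 0‖)]
  ring

end Stmt10

namespace Stmt10

lemma msym_zero (om lam ga p : ℝ) : msym om lam ga p 0 = 1 := by
  simp [msym]

lemma msym_abs (om lam ga p : ℝ) (k : ℤ) :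
    ‖msym om lam ga p k‖ =
      Real.sqrt ((1 - om ^ 2 * (k:ℝ) ^ 2 + 2 * lam * om ^ 2 * (k:ℝ) ^ 2 * Real.cos (k * p)) ^ 2
        + (ga * om * (k:ℝ)) ^ 2) := by
  have heq : msym om lam ga p k =
      ((1 - om ^ 2 * (k:ℝ) ^ 2 + 2 * lam * om ^ 2 * (k:ℝ) ^ 2 * Real.cos (k * p) : ℝ) : ℂ)
        + ((ga * om * (k:ℝ) : ℝ) : ℂ) * Complex.I := by
    unfold msym
    push_cast
    ring
  rw [heq, Complex.norm_add_mul_I]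

end Stmt10

namespace Stmt10

lemma msym_lb (om lam ga p Θ : ℝ)
    (hbound : ∀ k : ℤ, k ≠ 0 → Θ ≤ min 1
      (Real.sqrt ((1 / (k : ℝ) ^ 2 + om ^ 2 * (2 * lam * Real.cos (k * p) - 1)) ^ 2
        + ga ^ 2 * om ^ 2 / (k : ℝ) ^ 2)))
    (k : ℤ) (hk : k ≠ 0) :
    Θ * (k : ℝ) ^ 2 ≤ ‖msym om lam ga p k‖ := by
  have hkR : ((k : ℝ)) ≠ 0 := Int.cast_ne_zero.2 hk
  have hk2 : (0:ℝ) < (k:ℝ)^2 := pow_two_pos_of_ne_zero hkR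
  set A : ℝ := (1 / (k : ℝ) ^ 2 + om ^ 2 * (2 * lam * Real.cos (k * p) - 1)) ^ 2
        + ga ^ 2 * om ^ 2 / (k : ℝ) ^ 2 with hA
  have hAnn : 0 ≤ A := by positivity
  have h1 : Θ ≤ Real.sqrt A := (hbound k hk).trans (min_le_right _ _)
  have h2 : Θ * (k:ℝ)^2 ≤ Real.sqrt A * (k:ℝ)^2 :=
    mul_le_mul_of_nonneg_right h1 hk2.le
  have h3 : Real.sqrt A * (k:ℝ)^2 = Real.sqrt (A * ((k:ℝ)^2)^2) := by
    rw [Real.sqrt_mul hAnn, Real.sqrt_sq hk2.le]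
  have h4 : A * ((k:ℝ)^2)^2
      = (1 - om ^ 2 * (k:ℝ) ^ 2 + 2 * lam * om ^ 2 * (k:ℝ) ^ 2 * Real.cos (k * p)) ^ 2
        + (ga * om * (k:ℝ)) ^ 2 := by
    rw [hA]
    field_simp
    ring
  rw [msym_abs, ← h4, ← h3]
  exact h2

lemma msym_ne (om lam ga p Θ : ℝ) (hΘ : 0 < Θ)
    (hbound : ∀ k : ℤ, k ≠ 0 → Θ ≤ min 1
      (Real.sqrt ((1 / (k : ℝ) ^ 2 + om ^ 2 * (2 * lam * Real.cos (k * p) - 1)) ^ 2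
        + ga ^ 2 * om ^ 2 / (k : ℝ) ^ 2)))
    (k : ℤ) : msym om lam ga p k ≠ 0 := by
  by_cases hk : k = 0
  · rw [hk, msym_zero]; exact one_ne_zero
  · have := msym_lb om lam ga p Θ hbound k hk
    have hk2 : (0:ℝ) < (k:ℝ)^2 := pow_two_pos_of_ne_zero (Int.cast_ne_zero.2 hk)
    have : 0 < ‖msym om lam ga p k‖ := lt_of_lt_of_le (by positivity) this
    exact fun h => by simp [h] at this

end Stmt10

namespace Stmt10

lemma abs_summable_of_summW {a : ℤ → ℂ} (Sa : Summable fun k => wt k * ‖a k‖) :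
    Summable fun k => ‖a k‖ :=
  Summable.of_nonneg_of_le (fun k => norm_nonneg _)
    (fun k => le_mul_of_one_le_left (norm_nonneg _) (one_le_wt k)) Sa

lemma inner_summable {a b : ℤ → ℂ} (Sa : Summable fun k => ‖a k‖)
    (Sb : Summable fun k => ‖b k‖) (k : ℤ) :
    Summable fun j => ‖a j * b (k - j)‖ := by
  refine Summable.of_nonneg_of_le (fun j => norm_nonneg _) (fun j => ?_)
    (Sa.mul_right (∑' l, ‖b l‖))
  rw [norm_mul]
  exact mul_le_mul_of_nonneg_left
    (Sb.le_tsum (k - j) fun _ _ => norm_nonneg _) (norm_nonneg _)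

lemma conv_est {a b : ℤ → ℂ} (ψ φ χ : ℤ → ℝ)
    (hψ : ∀ k, 0 ≤ ψ k) (hφ : ∀ j, 0 ≤ φ j) (hχ : ∀ l, 0 ≤ χ l)
    (hsub : ∀ j l : ℤ, ψ (j + l) ≤ φ j + χ l)
    (Sa : Summable fun k => ‖a k‖) (Sb : Summable fun k => ‖b k‖)
    (Sφ : Summable fun j => φ j * ‖a j‖)
    (Sχ : Summable fun l => χ l * ‖b l‖) :
    Summable (fun k => ψ k * ‖fconv a b k‖) ∧
    ∑' k, ψ k * ‖fconv a b k‖ ≤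
      (∑' j, φ j * ‖a j‖) * (∑' l, ‖b l‖)
        + (∑' j, ‖a j‖) * (∑' l, χ l * ‖b l‖) := by
  set G1 : ℤ × ℤ → ℝ := fun q => (φ q.1 * ‖a q.1‖) * ‖b q.2‖ with hG1def
  set G2 : ℤ × ℤ → ℝ := fun q => ‖a q.1‖ * (χ q.2 * ‖b q.2‖) with hG2def
  have SG1 : Summable G1 := by
    apply Summable.mul_of_nonneg Sφ Sb
    · intro j; exact mul_nonneg (hφ j) (norm_nonneg _)
    · intro l; exact norm_nonneg _
  have SG2 : Summable G2 := by
    apply Summable.mul_of_nonneg Sa Sχ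
    · intro j; exact norm_nonneg _
    · intro l; exact mul_nonneg (hχ l) (norm_nonneg _)
  set F : ℤ × ℤ → ℝ := fun q => ψ (q.1 + q.2) * (‖a q.1‖ * ‖b q.2‖)
    with hFdef
  have hFle : ∀ q : ℤ × ℤ, F q ≤ G1 q + G2 q := by
    rintro ⟨j, l⟩
    have h1 := hsub j l
    have h2 : (0:ℝ) ≤ ‖a j‖ * ‖b l‖ :=
      mul_nonneg (norm_nonneg _) (norm_nonneg _)
    show ψ (j + l) * (‖a j‖ * ‖b l‖) ≤
      (φ j * ‖a j‖) * ‖b l‖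
        + ‖a j‖ * (χ l * ‖b l‖)
    calc ψ (j + l) * (‖a j‖ * ‖b l‖)
        ≤ (φ j + χ l) * (‖a j‖ * ‖b l‖) :=
          mul_le_mul_of_nonneg_right h1 h2
      _ = _ := by ring
  have hFnn : ∀ q : ℤ × ℤ, 0 ≤ F q := fun q =>
    mul_nonneg (hψ _) (mul_nonneg (norm_nonneg _) (norm_nonneg _))
  have SF : Summable F := Summable.of_nonneg_of_le hFnn hFle (SG1.add SG2)
  have htsumF : ∑' q, F q ≤
      (∑' j, φ j * ‖a j‖) * (∑' l, ‖b l‖)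
        + (∑' j, ‖a j‖) * (∑' l, χ l * ‖b l‖) := by
    have h1 : ∑' q, F q ≤ ∑' q, (G1 q + G2 q) := Summable.tsum_le_tsum hFle SF (SG1.add SG2)
    rw [Summable.tsum_add SG1 SG2] at h1
    rw [Summable.tsum_mul_tsum Sφ Sb SG1, Summable.tsum_mul_tsum Sa Sχ SG2]
    exact h1
  -- reindex
  set e : ℤ × ℤ ≃ ℤ × ℤ :=
    ⟨fun q => (q.1 + q.2, q.1), fun q => (q.2, q.1 - q.2),
      fun q => by simp, fun q => by simp⟩ with hedef
  set H : ℤ × ℤ → ℝ := fun q => ψ q.1 * (‖a q.2‖ * ‖b (q.1 - q.2)‖)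
    with hHdef
  have hHe : (fun q => H (e q)) = F := by
    funext q
    simp only [hHdef, hFdef, hedef, Equiv.coe_fn_mk, add_sub_cancel_left]
  have SH : Summable H := e.summable_iff.1 (by rw [show (H ∘ ⇑e) = F from funext fun q => congrFun hHe q]; exact SF)
  have htsumH : ∑' q, H q = ∑' q, F q := by rw [← e.tsum_eq H, hHe]
  -- fiberwise
  have Sinner : ∀ k : ℤ, Summable fun j => ‖a j‖ * ‖b (k - j)‖ := by
    intro k
    exact (inner_summable Sa Sb k).congr fun j => by rw [norm_mul]
  have hM : HasSum (fun k => ψ k * ∑' j, ‖a j‖ * ‖b (k - j)‖)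
      (∑' q, H q) :=
    HasSum.prod_fiberwise SH.hasSum fun k => ((Sinner k).hasSum).mul_left (ψ k)
  have hpt : ∀ k, ψ k * ‖fconv a b k‖
      ≤ ψ k * ∑' j, ‖a j‖ * ‖b (k - j)‖ := by
    intro k
    refine mul_le_mul_of_nonneg_left ?_ (hψ k)
    have h1 : ‖fconv a b k‖ ≤ ∑' j, ‖a j * b (k - j)‖ := by
      exact
        norm_tsum_le_tsum_norm (f := fun j => a j * b (k - j))
          (inner_summable Sa Sb k)
    refine h1.trans_eq (tsum_congr fun j => by rw [norm_mul])
  have hSres : Summable (fun k => ψ k * ‖fconv a b k‖) :=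
    Summable.of_nonneg_of_le (fun k => mul_nonneg (hψ k) (norm_nonneg _)) hpt hM.summable
  refine ⟨hSres, ?_⟩
  calc ∑' k, ψ k * ‖fconv a b k‖
      ≤ ∑' k, ψ k * ∑' j, ‖a j‖ * ‖b (k - j)‖ :=
        Summable.tsum_le_tsum hpt hSres hM.summable
    _ = ∑' q, H q := hM.tsum_eq
    _ = ∑' q, F q := htsumH
    _ ≤ _ := htsumF

end Stmt10

namespace Stmt10

variable {a b : ℤ → ℂ}

lemma sq_summable_of_summW (Sa : Summable fun k => wt k * ‖a k‖) :
    Summable fun j : ℤ => (j : ℝ) ^ 2 * ‖a j‖ := (summW_iff a).1 Sa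

lemma abs1_summable_of_summW (Sa : Summable fun k => wt k * ‖a k‖) :
    Summable fun j : ℤ => |(j : ℝ)| * ‖a j‖ :=
  Summable.of_nonneg_of_le (fun j => mul_nonneg (abs_nonneg _) (norm_nonneg _))
    (fun j => mul_le_mul_of_nonneg_right (abs_le_wt j) (norm_nonneg _)) Sa

lemma tsum_sq_le (Sa : Summable fun k => wt k * ‖a k‖) :
    ∑' j : ℤ, (j : ℝ) ^ 2 * ‖a j‖ ≤ ∑' j, wt j * ‖a j‖ :=
  Summable.tsum_le_tsum (fun j => mul_le_mul_of_nonneg_right (sq_le_wt j) (norm_nonneg _))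
    (sq_summable_of_summW Sa) Sa

lemma tsum_abs1_le (Sa : Summable fun k => wt k * ‖a k‖) :
    ∑' j : ℤ, |(j : ℝ)| * ‖a j‖ ≤ ∑' j, wt j * ‖a j‖ :=
  Summable.tsum_le_tsum (fun j => mul_le_mul_of_nonneg_right (abs_le_wt j) (norm_nonneg _))
    (abs1_summable_of_summW Sa) Sa

lemma tsum_abs_le (Sa : Summable fun k => wt k * ‖a k‖) :
    ∑' j : ℤ, ‖a j‖ ≤ ∑' j, wt j * ‖a j‖ :=
  Summable.tsum_le_tsum (fun j => le_mul_of_one_le_left (norm_nonneg _) (one_le_wt j))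
    (abs_summable_of_summW Sa) Sa

lemma tsum_wt_nonneg (a : ℤ → ℂ) : 0 ≤ ∑' j, wt j * ‖a j‖ :=
  tsum_nonneg fun j => mul_nonneg (wt_pos j).le (norm_nonneg _)

lemma est_sq (Sa : Summable fun k => wt k * ‖a k‖)
    (Sb : Summable fun k => wt k * ‖b k‖) :
    Summable (fun k : ℤ => (k : ℝ) ^ 2 * ‖fconv a b k‖) ∧
    ∑' k : ℤ, (k : ℝ) ^ 2 * ‖fconv a b k‖ ≤
      4 * (∑' j, wt j * ‖a j‖) * (∑' l, wt l * ‖b l‖) := by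
  have h := conv_est (a := a) (b := b) (fun k => (k : ℝ) ^ 2) (fun j => 2 * (j : ℝ) ^ 2)
    (fun l => 2 * (l : ℝ) ^ 2)
    (fun k => by positivity) (fun j => by positivity) (fun l => by positivity)
    (fun j l => by push_cast; nlinarith [sq_nonneg ((j : ℝ) - l)])
    (abs_summable_of_summW Sa) (abs_summable_of_summW Sb)
    (by
      refine ((sq_summable_of_summW Sa).mul_left 2).congr fun j => ?_
      ring)
    (by
      refine ((sq_summable_of_summW Sb).mul_left 2).congr fun l => ?_
      ring)
  beta_reduce at h
  refine ⟨h.1, h.2.trans ?_⟩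
  have e1 : ∑' j : ℤ, 2 * (j : ℝ) ^ 2 * ‖a j‖
      = 2 * ∑' j : ℤ, (j : ℝ) ^ 2 * ‖a j‖ := by
    rw [← tsum_mul_left]
    exact tsum_congr fun j => by ring
  have e2 : ∑' l : ℤ, 2 * (l : ℝ) ^ 2 * ‖b l‖
      = 2 * ∑' l : ℤ, (l : ℝ) ^ 2 * ‖b l‖ := by
    rw [← tsum_mul_left]
    exact tsum_congr fun l => by ring
  rw [e1, e2]
  have b1 := tsum_sq_le Sa
  have b2 := tsum_sq_le Sb
  have b3 := tsum_abs_le Sa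
  have b4 := tsum_abs_le Sb
  have n1 := tsum_wt_nonneg a
  have n2 := tsum_wt_nonneg b
  have n3 : 0 ≤ ∑' j, ‖a j‖ := tsum_nonneg fun j => norm_nonneg _
  have n4 : 0 ≤ ∑' l, ‖b l‖ := tsum_nonneg fun l => norm_nonneg _
  have n5 : 0 ≤ ∑' j : ℤ, (j:ℝ)^2 * ‖a j‖ := tsum_nonneg fun j => by positivity
  have n6 : 0 ≤ ∑' l : ℤ, (l:ℝ)^2 * ‖b l‖ := tsum_nonneg fun l => by positivity
  nlinarith [mul_le_mul b1 b4 n4 n1, mul_le_mul b3 b2 n6 n1]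

lemma est_abs1 (Sa : Summable fun k => wt k * ‖a k‖)
    (Sb : Summable fun k => wt k * ‖b k‖) :
    Summable (fun k : ℤ => |(k : ℝ)| * ‖fconv a b k‖) ∧
    ∑' k : ℤ, |(k : ℝ)| * ‖fconv a b k‖ ≤
      2 * (∑' j, wt j * ‖a j‖) * (∑' l, wt l * ‖b l‖) := by
  have h := conv_est (a := a) (b := b) (fun k => |(k : ℝ)|) (fun j => |(j : ℝ)|)
    (fun l => |(l : ℝ)|)
    (fun k => abs_nonneg _) (fun j => abs_nonneg _) (fun l => abs_nonneg _)
    (fun j l => by push_cast; exact abs_add_le _ _)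
    (abs_summable_of_summW Sa) (abs_summable_of_summW Sb)
    (abs1_summable_of_summW Sa) (abs1_summable_of_summW Sb)
  beta_reduce at h
  refine ⟨h.1, h.2.trans ?_⟩
  have b1 := tsum_abs1_le Sa
  have b2 := tsum_abs1_le Sb
  have b3 := tsum_abs_le Sa
  have b4 := tsum_abs_le Sb
  have n1 := tsum_wt_nonneg a
  have n2 := tsum_wt_nonneg b
  have n3 : 0 ≤ ∑' j, ‖a j‖ := tsum_nonneg fun j => norm_nonneg _
  have n4 : 0 ≤ ∑' l, ‖b l‖ := tsum_nonneg fun l => norm_nonneg _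
  have n5 : 0 ≤ ∑' j : ℤ, |(j:ℝ)| * ‖a j‖ := tsum_nonneg fun j => by positivity
  have n6 : 0 ≤ ∑' l : ℤ, |(l:ℝ)| * ‖b l‖ := tsum_nonneg fun l => by positivity
  nlinarith [mul_le_mul b1 b4 n4 n1, mul_le_mul b3 b2 n6 n1]

end Stmt10

namespace Stmt10

noncomputable def Psi (om lam ga : ℝ) (k : ℤ) : ℝ :=
  om ^ 2 * (1 + 2 * lam) * (k : ℝ) ^ 2 + ga * om * |(k : ℝ)|

lemma Psi_nonneg {om lam ga : ℝ} (hom : 0 ≤ om) (hlam : 0 ≤ lam) (hga : 0 ≤ ga) (k : ℤ) :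
    0 ≤ Psi om lam ga k := by unfold Psi; positivity

lemma est_Psi {a b : ℤ → ℂ} {om lam ga : ℝ} (hom : 0 < om) (hlam : 0 < lam) (hga : 0 ≤ ga)
    (Sa : Summable fun k => wt k * ‖a k‖)
    (Sb : Summable fun k => wt k * ‖b k‖) :
    Summable (fun k : ℤ => Psi om lam ga k * ‖fconv a b k‖) ∧
    ∑' k : ℤ, Psi om lam ga k * ‖fconv a b k‖ ≤
      (2 * om * (2 * om + 4 * lam * om + ga)) *
        ((∑' j, wt j * ‖a j‖) * (∑' l, wt l * ‖b l‖)) := by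
  obtain ⟨hs2, he2⟩ := est_sq Sa Sb
  obtain ⟨hs1, he1⟩ := est_abs1 Sa Sb
  have hpt : ∀ k : ℤ, Psi om lam ga k * ‖fconv a b k‖
      = om ^ 2 * (1 + 2 * lam) * ((k : ℝ) ^ 2 * ‖fconv a b k‖)
        + ga * om * (|(k : ℝ)| * ‖fconv a b k‖) := by
    intro k; unfold Psi; ring
  constructor
  · exact ((hs2.mul_left (om ^ 2 * (1 + 2 * lam))).add (hs1.mul_left (ga * om))).congr
      fun k => (hpt k).symm
  · have e : ∑' k : ℤ, Psi om lam ga k * ‖fconv a b k‖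
        = om ^ 2 * (1 + 2 * lam) * ∑' k : ℤ, (k : ℝ) ^ 2 * ‖fconv a b k‖
          + ga * om * ∑' k : ℤ, |(k : ℝ)| * ‖fconv a b k‖ := by
      rw [← tsum_mul_left, ← tsum_mul_left,
        ← Summable.tsum_add (hs2.mul_left _) (hs1.mul_left _)]
      exact tsum_congr hpt
    rw [e]
    have n1 := tsum_wt_nonneg a
    have n2 := tsum_wt_nonneg b
    have c1 : (0:ℝ) ≤ om ^ 2 * (1 + 2 * lam) := by positivity
    have c2 : (0:ℝ) ≤ ga * om := by positivity
    nlinarith [mul_le_mul_of_nonneg_left he2 c1, mul_le_mul_of_nonneg_left he1 c2,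
      mul_nonneg n1 n2]

noncomputable def coefC (om lam ga p : ℝ) (k : ℤ) : ℂ :=
  -(om : ℂ) ^ 2 * (-(k : ℂ) ^ 2) *
      (1 - (lam : ℂ) * Complex.exp (-(Complex.I * (k : ℂ) * (p : ℂ)))
         - (lam : ℂ) * Complex.exp (Complex.I * (k : ℂ) * (p : ℂ)))
    - (ga : ℂ) * (om : ℂ) * (Complex.I * (k : ℂ))

lemma Fcoef_eq (om lam ga p : ℝ) (c h : ℤ → ℂ) (k : ℤ) :
    Fcoef om lam ga p c h k = coefC om lam ga p k * fconv c c k + h k := by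
  unfold Fcoef coefC; ring

lemma coefC_zero (om lam ga p : ℝ) : coefC om lam ga p 0 = 0 := by
  simp [coefC]

lemma coefC_abs_le {om lam ga : ℝ} (p : ℝ) (hom : 0 ≤ om) (hlam : 0 ≤ lam) (hga : 0 ≤ ga)
    (k : ℤ) : ‖coefC om lam ga p k‖ ≤ Psi om lam ga k := by
  have e1 : ‖Complex.exp (-(Complex.I * (k : ℂ) * (p : ℂ)))‖ = 1 := by
    rw [Complex.norm_exp]; simp
  have e2 : ‖Complex.exp (Complex.I * (k : ℂ) * (p : ℂ))‖ = 1 := by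
    rw [Complex.norm_exp]; simp
  have habs_k : ‖(k : ℂ)‖ = |(k : ℝ)| := by
    rw [← Complex.ofReal_intCast, Complex.norm_real, Real.norm_eq_abs]
  set B : ℂ := 1 - (lam : ℂ) * Complex.exp (-(Complex.I * (k : ℂ) * (p : ℂ)))
         - (lam : ℂ) * Complex.exp (Complex.I * (k : ℂ) * (p : ℂ)) with hB
  have hBle : ‖B‖ ≤ 1 + 2 * lam := by
    rw [hB]
    calc ‖1 - (lam : ℂ) * Complex.exp (-(Complex.I * (k : ℂ) * (p : ℂ)))
           - (lam : ℂ) * Complex.exp (Complex.I * (k : ℂ) * (p : ℂ))‖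
        ≤ ‖1 - (lam : ℂ) * Complex.exp (-(Complex.I * (k : ℂ) * (p : ℂ)))‖
            + ‖(lam : ℂ) * Complex.exp (Complex.I * (k : ℂ) * (p : ℂ))‖ := by
          exact norm_sub_le _ _
      _ ≤ (‖(1 : ℂ)‖ + ‖(lam : ℂ)
            * Complex.exp (-(Complex.I * (k : ℂ) * (p : ℂ)))‖)
            + ‖(lam : ℂ) * Complex.exp (Complex.I * (k : ℂ) * (p : ℂ))‖ := by
          gcongr
          exact norm_sub_le _ _
      _ = 1 + lam + lam := by
          rw [norm_mul, norm_mul, e1, e2, norm_one, Complex.norm_real, Real.norm_eq_abs, _root_.abs_of_nonneg hlam]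
          ring
      _ ≤ 1 + 2 * lam := by linarith
  have hXabs : ‖-(om : ℂ) ^ 2 * (-(k : ℂ) ^ 2)‖ = om ^ 2 * (k : ℝ) ^ 2 := by
    rw [norm_mul, norm_neg, norm_neg, norm_pow, norm_pow,
      Complex.norm_real, Real.norm_eq_abs, habs_k, _root_.abs_of_nonneg hom, _root_.sq_abs]
  have hYabs : ‖(ga : ℂ) * (om : ℂ) * (Complex.I * (k : ℂ))‖
      = ga * om * |(k : ℝ)| := by
    rw [norm_mul, norm_mul, norm_mul, Complex.norm_real, Real.norm_eq_abs, Complex.norm_real, Real.norm_eq_abs, Complex.norm_I,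
      habs_k, _root_.abs_of_nonneg hga, _root_.abs_of_nonneg hom]
    ring
  unfold coefC Psi
  calc ‖-(om : ℂ) ^ 2 * (-(k : ℂ) ^ 2) * B
          - (ga : ℂ) * (om : ℂ) * (Complex.I * (k : ℂ))‖
      ≤ ‖-(om : ℂ) ^ 2 * (-(k : ℂ) ^ 2) * B‖
          + ‖(ga : ℂ) * (om : ℂ) * (Complex.I * (k : ℂ))‖ :=
        norm_sub_le _ _
    _ ≤ om ^ 2 * (k : ℝ) ^ 2 * (1 + 2 * lam) + ga * om * |(k : ℝ)| := by
        rw [norm_mul, hXabs, hYabs]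
        have : (0:ℝ) ≤ om ^ 2 * (k : ℝ) ^ 2 := by positivity
        exact add_le_add_left (mul_le_mul_of_nonneg_left hBle this) _
    _ = om ^ 2 * (1 + 2 * lam) * (k : ℝ) ^ 2 + ga * om * |(k : ℝ)| := by ring

end Stmt10

namespace Stmt10

lemma fconv_comm (a b : ℤ → ℂ) (k : ℤ) : fconv a b k = fconv b a k := by
  unfold fconv
  have h := (Equiv.subLeft k).tsum_eq (fun j => b j * a (k - j))
  rw [← h]
  refine tsum_congr fun j => ?_
  simp [Equiv.subLeft, sub_sub_cancel, mul_comm]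

lemma fconv_sq_diff {c₁ c₂ : ℤ → ℂ} (S1 : Summable fun j => ‖c₁ j‖)
    (S2 : Summable fun j => ‖c₂ j‖) (k : ℤ) :
    fconv c₁ c₁ k - fconv c₂ c₂ k
      = fconv (fun j => c₁ j - c₂ j) (fun j => c₁ j + c₂ j) k := by
  have nsum : ∀ (u v : ℤ → ℂ), (Summable fun j => ‖u j‖) →
      (Summable fun j => ‖v j‖) → Summable fun j => u j * v (k - j) := by
    intro u v hu hv
    exact Summable.of_norm (inner_summable hu hv k)
  have s11 := nsum c₁ c₁ S1 S1
  have s12 := nsum c₁ c₂ S1 S2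
  have s21 := nsum c₂ c₁ S2 S1
  have s22 := nsum c₂ c₂ S2 S2
  have hsplit : fconv (fun j => c₁ j - c₂ j) (fun j => c₁ j + c₂ j) k
      = (∑' j, (c₁ j * c₁ (k - j) + c₁ j * c₂ (k - j)))
        - ∑' j, (c₂ j * c₁ (k - j) + c₂ j * c₂ (k - j)) := by
    rw [← Summable.tsum_sub (s11.add s12) (s21.add s22)]
    exact tsum_congr fun j => by ring
  rw [hsplit, Summable.tsum_add s11 s12, Summable.tsum_add s21 s22]
  have hcross : ∑' j, c₁ j * c₂ (k - j) = ∑' j, c₂ j * c₁ (k - j) :=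
    fconv_comm c₁ c₂ k
  unfold fconv
  rw [hcross]
  ring

end Stmt10

namespace Stmt10

noncomputable def Rmap (om lam ga p : ℝ) (h c : ℤ → ℂ) (k : ℤ) : ℂ :=
  Fcoef om lam ga p c h k / msym om lam ga p k

lemma summW_sub {c₁ c₂ : ℤ → ℂ}
    (S1 : Summable fun k => wt k * ‖c₁ k‖)
    (S2 : Summable fun k => wt k * ‖c₂ k‖) :
    Summable fun k => wt k * ‖c₁ k - c₂ k‖ := by
  refine Summable.of_nonneg_of_le
    (fun k => mul_nonneg (wt_pos k).le (norm_nonneg _)) (fun k => ?_) (S1.add S2)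
  have := norm_sub_le (c₁ k) (c₂ k)
  nlinarith [wt_pos k, norm_nonneg (c₁ k), norm_nonneg (c₂ k)]

lemma summW_add {c₁ c₂ : ℤ → ℂ}
    (S1 : Summable fun k => wt k * ‖c₁ k‖)
    (S2 : Summable fun k => wt k * ‖c₂ k‖) :
    Summable fun k => wt k * ‖c₁ k + c₂ k‖ := by
  refine Summable.of_nonneg_of_le
    (fun k => mul_nonneg (wt_pos k).le (norm_nonneg _)) (fun k => ?_) (S1.add S2)
  have := norm_add_le (c₁ k) (c₂ k)
  nlinarith [wt_pos k, norm_nonneg (c₁ k), norm_nonneg (c₂ k)]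

lemma tsum_wt_add_le {c₁ c₂ : ℤ → ℂ}
    (S1 : Summable fun k => wt k * ‖c₁ k‖)
    (S2 : Summable fun k => wt k * ‖c₂ k‖) :
    ∑' k, wt k * ‖c₁ k + c₂ k‖
      ≤ (∑' k, wt k * ‖c₁ k‖) + ∑' k, wt k * ‖c₂ k‖ := by
  rw [← Summable.tsum_add S1 S2]
  refine Summable.tsum_le_tsum (fun k => ?_) (summW_add S1 S2) (S1.add S2)
  have := norm_add_le (c₁ k) (c₂ k)
  nlinarith [wt_pos k, norm_nonneg (c₁ k), norm_nonneg (c₂ k)]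

section main

variable {om lam ga p Θ : ℝ}

lemma key_pt (hΘ : 0 < Θ) (hΘ1 : Θ ≤ 1)
    (hbound : ∀ k : ℤ, k ≠ 0 → Θ ≤ min 1
      (Real.sqrt ((1 / (k : ℝ) ^ 2 + om ^ 2 * (2 * lam * Real.cos (k * p) - 1)) ^ 2
        + ga ^ 2 * om ^ 2 / (k : ℝ) ^ 2)))
    (k : ℤ) (num : ℂ) (x : ℝ) (hx : ‖num‖ ≤ x) :
    wt k * ‖num / msym om lam ga p k‖ ≤ Θ⁻¹ * x := by
  have hxnn : 0 ≤ x := (norm_nonneg _).trans hx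
  have hΘinv : 1 ≤ Θ⁻¹ := (one_le_inv₀ hΘ).2 hΘ1
  by_cases hk : k = 0
  · subst hk
    rw [msym_zero, div_one]
    have : wt 0 = 1 := by simp [wt]
    rw [this, one_mul]
    calc ‖num‖ ≤ x := hx
      _ = 1 * x := (one_mul x).symm
      _ ≤ Θ⁻¹ * x := mul_le_mul_of_nonneg_right hΘinv hxnn
  · have hk2 : (0:ℝ) < (k:ℝ)^2 := pow_two_pos_of_ne_zero (Int.cast_ne_zero.2 hk)
    have hm := msym_lb om lam ga p Θ hbound k hk
    have hmpos : (0:ℝ) < Θ * (k:ℝ)^2 := by positivity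
    have hwt : wt k = (k:ℝ)^2 := by simp [wt, hk]
    rw [norm_div, hwt]
    calc (k:ℝ)^2 * (‖num‖ / ‖msym om lam ga p k‖)
        ≤ (k:ℝ)^2 * (‖num‖ / (Θ * (k:ℝ)^2)) := by
          exact mul_le_mul_of_nonneg_left
            (div_le_div_of_nonneg_left (norm_nonneg _) hmpos hm) hk2.le
      _ = Θ⁻¹ * ‖num‖ := by field_simp
      _ ≤ Θ⁻¹ * x := mul_le_mul_of_nonneg_left hx (by positivity)

lemma Rdiff_est (hom : 0 < om) (hlam : 0 < lam) (hga : 0 ≤ ga) (hΘ : 0 < Θ) (hΘ1 : Θ ≤ 1)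
    (hbound : ∀ k : ℤ, k ≠ 0 → Θ ≤ min 1
      (Real.sqrt ((1 / (k : ℝ) ^ 2 + om ^ 2 * (2 * lam * Real.cos (k * p) - 1)) ^ 2
        + ga ^ 2 * om ^ 2 / (k : ℝ) ^ 2)))
    (h c₁ c₂ : ℤ → ℂ)
    (S1 : Summable fun k => wt k * ‖c₁ k‖)
    (S2 : Summable fun k => wt k * ‖c₂ k‖) :
    Summable (fun k => wt k *
      ‖Rmap om lam ga p h c₁ k - Rmap om lam ga p h c₂ k‖) ∧
    ∑' k, wt k * ‖Rmap om lam ga p h c₁ k - Rmap om lam ga p h c₂ k‖ ≤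
      (2 * om * (2 * om + 4 * lam * om + ga) / Θ) *
        (((∑' j, wt j * ‖c₁ j‖) + ∑' j, wt j * ‖c₂ j‖) *
          ∑' j, wt j * ‖c₁ j - c₂ j‖) := by
  set s : ℤ → ℂ := fun j => c₁ j - c₂ j with hs
  set t : ℤ → ℂ := fun j => c₁ j + c₂ j with ht
  have Ss : Summable fun k => wt k * ‖s k‖ := summW_sub S1 S2
  have St : Summable fun k => wt k * ‖t k‖ := summW_add S1 S2
  have hdiff : ∀ k, Rmap om lam ga p h c₁ k - Rmap om lam ga p h c₂ k
      = (coefC om lam ga p k * fconv s t k) / msym om lam ga p k := by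
    intro k
    unfold Rmap
    rw [div_sub_div_same, Fcoef_eq, Fcoef_eq]
    have := fconv_sq_diff (abs_summable_of_summW S1) (abs_summable_of_summW S2) k
    rw [← this]
    ring
  obtain ⟨SPsi, hPsi⟩ := est_Psi (a := s) (b := t) hom hlam hga Ss St
  have hpt : ∀ k, wt k *
      ‖Rmap om lam ga p h c₁ k - Rmap om lam ga p h c₂ k‖
      ≤ Θ⁻¹ * (Psi om lam ga k * ‖fconv s t k‖) := by
    intro k
    rw [hdiff k]
    refine key_pt hΘ hΘ1 hbound k _ _ ?_
    rw [norm_mul]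
    exact mul_le_mul_of_nonneg_right (coefC_abs_le p hom.le hlam.le hga k)
      (norm_nonneg _)
  have Smaj : Summable fun k => Θ⁻¹ * (Psi om lam ga k * ‖fconv s t k‖) :=
    SPsi.mul_left _
  have Sres : Summable (fun k => wt k *
      ‖Rmap om lam ga p h c₁ k - Rmap om lam ga p h c₂ k‖) :=
    Summable.of_nonneg_of_le (fun k => mul_nonneg (wt_pos k).le (norm_nonneg _))
      hpt Smaj
  refine ⟨Sres, ?_⟩
  have hTt : ∑' j, wt j * ‖t j‖
      ≤ (∑' j, wt j * ‖c₁ j‖) + ∑' j, wt j * ‖c₂ j‖ :=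
    tsum_wt_add_le S1 S2
  calc ∑' k, wt k * ‖Rmap om lam ga p h c₁ k - Rmap om lam ga p h c₂ k‖
      ≤ ∑' k, Θ⁻¹ * (Psi om lam ga k * ‖fconv s t k‖) :=
        Summable.tsum_le_tsum hpt Sres Smaj
    _ = Θ⁻¹ * ∑' k, Psi om lam ga k * ‖fconv s t k‖ := tsum_mul_left
    _ ≤ Θ⁻¹ * ((2 * om * (2 * om + 4 * lam * om + ga)) *
          ((∑' j, wt j * ‖s j‖) * (∑' l, wt l * ‖t l‖))) :=
        mul_le_mul_of_nonneg_left hPsi (by positivity)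
    _ ≤ Θ⁻¹ * ((2 * om * (2 * om + 4 * lam * om + ga)) *
          ((∑' j, wt j * ‖s j‖) *
            ((∑' j, wt j * ‖c₁ j‖) + ∑' j, wt j * ‖c₂ j‖))) := by
        have hsnn := tsum_wt_nonneg s
        have hC : (0:ℝ) ≤ 2 * om * (2 * om + 4 * lam * om + ga) := by positivity
        exact mul_le_mul_of_nonneg_left (mul_le_mul_of_nonneg_left
          (mul_le_mul_of_nonneg_left hTt hsnn) hC) (by positivity)
    _ = (2 * om * (2 * om + 4 * lam * om + ga) / Θ) *
        (((∑' j, wt j * ‖c₁ j‖) + ∑' j, wt j * ‖c₂ j‖) *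
          ∑' j, wt j * ‖s j‖) := by
        field_simp

lemma Rmap_bound (hom : 0 < om) (hlam : 0 < lam) (hga : 0 ≤ ga) (hΘ : 0 < Θ) (hΘ1 : Θ ≤ 1)
    (hbound : ∀ k : ℤ, k ≠ 0 → Θ ≤ min 1
      (Real.sqrt ((1 / (k : ℝ) ^ 2 + om ^ 2 * (2 * lam * Real.cos (k * p) - 1)) ^ 2
        + ga ^ 2 * om ^ 2 / (k : ℝ) ^ 2)))
    (h c : ℤ → ℂ) (hh : Summable fun k : ℤ => ‖h k‖)
    (S : Summable fun k => wt k * ‖c k‖) :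
    Summable (fun k => wt k * ‖Rmap om lam ga p h c k‖) ∧
    ∑' k, wt k * ‖Rmap om lam ga p h c k‖ ≤
      ((2 * om * (2 * om + 4 * lam * om + ga)) * (∑' j, wt j * ‖c j‖) ^ 2
        + wnorm h) / Θ := by
  obtain ⟨SPsi, hPsi⟩ := est_Psi (a := c) (b := c) hom hlam hga S S
  have hpt : ∀ k, wt k * ‖Rmap om lam ga p h c k‖
      ≤ Θ⁻¹ * (Psi om lam ga k * ‖fconv c c k‖ + ‖h k‖) := by
    intro k
    unfold Rmap
    rw [Fcoef_eq]
    refine key_pt hΘ hΘ1 hbound k _ _ ?_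
    calc ‖coefC om lam ga p k * fconv c c k + h k‖
        ≤ ‖coefC om lam ga p k * fconv c c k‖ + ‖h k‖ :=
          norm_add_le _ _
      _ ≤ Psi om lam ga k * ‖fconv c c k‖ + ‖h k‖ := by
          rw [norm_mul]
          exact add_le_add_left (mul_le_mul_of_nonneg_right
            (coefC_abs_le p hom.le hlam.le hga k) (norm_nonneg (fconv c c k))) _
  have Smaj : Summable fun k =>
      Θ⁻¹ * (Psi om lam ga k * ‖fconv c c k‖ + ‖h k‖) :=
    (SPsi.add hh).mul_left _
  have Sres : Summable (fun k => wt k * ‖Rmap om lam ga p h c k‖) :=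
    Summable.of_nonneg_of_le (fun k => mul_nonneg (wt_pos k).le (norm_nonneg _))
      hpt Smaj
  refine ⟨Sres, ?_⟩
  calc ∑' k, wt k * ‖Rmap om lam ga p h c k‖
      ≤ ∑' k, Θ⁻¹ * (Psi om lam ga k * ‖fconv c c k‖ + ‖h k‖) :=
        Summable.tsum_le_tsum hpt Sres Smaj
    _ = Θ⁻¹ * ((∑' k, Psi om lam ga k * ‖fconv c c k‖) + wnorm h) := by
        rw [tsum_mul_left, Summable.tsum_add SPsi hh]
        rfl
    _ ≤ Θ⁻¹ * ((2 * om * (2 * om + 4 * lam * om + ga)) *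
          (∑' j, wt j * ‖c j‖) ^ 2 + wnorm h) := by
        refine mul_le_mul_of_nonneg_left ?_ (by positivity)
        have := hPsi
        nlinarith [tsum_wt_nonneg c]
    _ = ((2 * om * (2 * om + 4 * lam * om + ga)) * (∑' j, wt j * ‖c j‖) ^ 2
          + wnorm h) / Θ := by
        field_simp

end main

end Stmt10

open scoped ENNReal

namespace Stmt10

instance factOne : Fact ((1 : ℝ≥0∞) ≤ 1) := ⟨le_rfl⟩

lemma memℓp_one_of (c : ℤ → ℂ) (S : Summable fun k => ‖c k‖) :
    Memℓp c (1 : ℝ≥0∞) := by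
  refine memℓp_gen ?_
  simp only [ENNReal.toReal_one, Real.rpow_one]
  simpa using S

lemma summable_abs_of_lp (f : lp (fun _ : ℤ => ℂ) 1) :
    Summable fun k => ‖f k‖ := by
  have := (lp.memℓp f).summable (by norm_num : (0:ℝ) < (1 : ℝ≥0∞).toReal)
  simpa [ENNReal.toReal_one, Real.rpow_one] using this

lemma norm_lp_eq (f : lp (fun _ : ℤ => ℂ) 1) : ‖f‖ = ∑' k, ‖f k‖ := by
  rw [lp.norm_eq_tsum_rpow (by norm_num) f]
  simp

lemma wtC_ne (k : ℤ) : ((wt k : ℝ) : ℂ) ≠ 0 := by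
  simpa using (wt_pos k).ne'

lemma abs_wt_mul (k : ℤ) (z : ℂ) :
    ‖((wt k : ℝ) : ℂ) * z‖ = wt k * ‖z‖ := by
  rw [norm_mul, Complex.norm_real, Real.norm_eq_abs, _root_.abs_of_nonneg (wt_pos k).le]

noncomputable def toL (c : ℤ → ℂ) (S : Summable fun k => wt k * ‖c k‖) :
    lp (fun _ : ℤ => ℂ) 1 :=
  ⟨fun k => ((wt k : ℝ) : ℂ) * c k,
    memℓp_one_of _ (S.congr fun k => (abs_wt_mul k (c k)).symm)⟩

lemma toL_apply (c : ℤ → ℂ) (S : Summable fun k => wt k * ‖c k‖) (k : ℤ) :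
    (toL c S : ∀ _ : ℤ, ℂ) k = ((wt k : ℝ) : ℂ) * c k := rfl

lemma norm_toL (c : ℤ → ℂ) (S : Summable fun k => wt k * ‖c k‖) :
    ‖toL c S‖ = ∑' k, wt k * ‖c k‖ := by
  rw [norm_lp_eq]
  exact tsum_congr fun k => abs_wt_mul k (c k)

noncomputable def fromL (f : lp (fun _ : ℤ => ℂ) 1) : ℤ → ℂ :=
  fun k => f k / ((wt k : ℝ) : ℂ)

lemma abs_wt_fromL (f : lp (fun _ : ℤ => ℂ) 1) (k : ℤ) :
    wt k * ‖fromL f k‖ = ‖f k‖ := by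
  unfold fromL
  rw [norm_div, Complex.norm_real, Real.norm_eq_abs, _root_.abs_of_nonneg (wt_pos k).le]
  rw [← mul_div_assoc]
  exact mul_div_cancel_left₀ _ (wt_pos k).ne'

lemma summW_fromL (f : lp (fun _ : ℤ => ℂ) 1) :
    Summable fun k => wt k * ‖fromL f k‖ :=
  (summable_abs_of_lp f).congr fun k => (abs_wt_fromL f k).symm

lemma tsum_fromL (f : lp (fun _ : ℤ => ℂ) 1) :
    ∑' k, wt k * ‖fromL f k‖ = ‖f‖ := by
  rw [norm_lp_eq]
  exact tsum_congr fun k => abs_wt_fromL f k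

lemma fromL_toL (c : ℤ → ℂ) (S : Summable fun k => wt k * ‖c k‖) :
    fromL (toL c S) = c := by
  funext k
  show ((wt k : ℝ) : ℂ) * c k / ((wt k : ℝ) : ℂ) = c k
  exact mul_div_cancel_left₀ _ (wtC_ne k)

lemma norm_toL_sub (c d : ℤ → ℂ) (S : Summable fun k => wt k * ‖c k‖)
    (S' : Summable fun k => wt k * ‖d k‖) :
    ‖toL c S - toL d S'‖ = ∑' k, wt k * ‖c k - d k‖ := by
  rw [norm_lp_eq]
  refine tsum_congr fun k => ?_
  have h1 : ((toL c S - toL d S' : lp (fun _ : ℤ => ℂ) 1) : ∀ _ : ℤ, ℂ) k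
      = ((wt k : ℝ) : ℂ) * c k - ((wt k : ℝ) : ℂ) * d k := by
    rw [lp.coeFn_sub]
    rfl
  rw [h1, ← mul_sub, abs_wt_mul]

lemma fromL_sub (f g : lp (fun _ : ℤ => ℂ) 1) (k : ℤ) :
    fromL f k - fromL g k = fromL (f - g) k := by
  unfold fromL
  rw [lp.coeFn_sub, Pi.sub_apply, sub_div]

end Stmt10

open scoped NNReal ENNReal
open Stmt10

/-- Theorem 1, existence: assume Θ > 0 as in the multiplier bound
and 0 < ‖h‖ < Θ²/(8ω(2ω+4λω+γ)). Then 𝒦U = 𝓕(U,h) has a unique solution in the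
closed ball ‖U‖₂ ≤ ρ_h, and 𝓡(·,h) = 𝒦⁻¹𝓕(·,h) is a contraction on that ball
with constant 4ω(2ω+4λω+γ)ρ_h/Θ < 1. -/
theorem stmt_10 (om lam ga p Θ : ℝ) (hom : 0 < om) (hlam : 0 < lam) (hga : 0 ≤ ga)
    (hΘ : 0 < Θ)
    (hbound : ∀ k : ℤ, k ≠ 0 → Θ ≤ min 1
      (Real.sqrt ((1 / (k : ℝ) ^ 2 + om ^ 2 * (2 * lam * Real.cos (k * p) - 1)) ^ 2
        + ga ^ 2 * om ^ 2 / (k : ℝ) ^ 2)))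
    (h : ℤ → ℂ) (hh : Summable fun k : ℤ => ‖h k‖)
    (hpos : 0 < wnorm h)
    (hsmall : wnorm h < Θ ^ 2 / (8 * om * (2 * om + 4 * lam * om + ga))) :
    ∀ ρ : ℝ,
      ρ = (Θ - Real.sqrt (Θ ^ 2 - 8 * om * (2 * om + 4 * lam * om + ga) * wnorm h)) /
            (4 * om * (2 * om + 4 * lam * om + ga)) →
      ((∃! c : ℤ → ℂ,
          (Summable fun k : ℤ => (k : ℝ) ^ 2 * ‖c k‖) ∧
          w2norm c ≤ ρ ∧
          ∀ k : ℤ, msym om lam ga p k * c k = Fcoef om lam ga p c h k) ∧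
       4 * om * (2 * om + 4 * lam * om + ga) * ρ / Θ < 1 ∧
       (∀ c₁ c₂ d₁ d₂ : ℤ → ℂ,
          (Summable fun k : ℤ => (k : ℝ) ^ 2 * ‖c₁ k‖) →
          (Summable fun k : ℤ => (k : ℝ) ^ 2 * ‖c₂ k‖) →
          w2norm c₁ ≤ ρ → w2norm c₂ ≤ ρ →
          (Summable fun k : ℤ => (k : ℝ) ^ 2 * ‖d₁ k‖) →
          (Summable fun k : ℤ => (k : ℝ) ^ 2 * ‖d₂ k‖) →
          (∀ k : ℤ, msym om lam ga p k * d₁ k = Fcoef om lam ga p c₁ h k) →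
          (∀ k : ℤ, msym om lam ga p k * d₂ k = Fcoef om lam ga p c₂ h k) →
          w2norm (fun k => d₁ k - d₂ k) ≤
            (4 * om * (2 * om + 4 * lam * om + ga) * ρ / Θ) *
              w2norm (fun k => c₁ k - c₂ k))) := by
  intro ρ hρ
  classical
  have haC : (0:ℝ) < 2 * om * (2 * om + 4 * lam * om + ga) := by
    have h1 : (0:ℝ) < 2 * om + 4 * lam * om + ga := by nlinarith
    have h2 : (0:ℝ) < 2 * om := by linarith
    exact mul_pos h2 h1
  set aC : ℝ := 2 * om * (2 * om + 4 * lam * om + ga) with haCdef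
  have hΘ1 : Θ ≤ 1 := (hbound 1 one_ne_zero).trans (min_le_left _ _)
  have h84 : 8 * om * (2 * om + 4 * lam * om + ga) = 4 * aC := by rw [haCdef]; ring
  have h42 : 4 * om * (2 * om + 4 * lam * om + ga) = 2 * aC := by rw [haCdef]; ring
  have hsm' : wnorm h * (8 * om * (2 * om + 4 * lam * om + ga)) < Θ ^ 2 :=
    (lt_div_iff₀ (by rw [h84]; linarith)).1 hsmall
  have hdisc : 0 < Θ ^ 2 - 8 * om * (2 * om + 4 * lam * om + ga) * wnorm h := by nlinarith
  set sq : ℝ := Real.sqrt (Θ ^ 2 - 8 * om * (2 * om + 4 * lam * om + ga) * wnorm h)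
    with hsqdef
  have hsqpos : 0 < sq := Real.sqrt_pos.2 hdisc
  have hsq2 : sq ^ 2 = Θ ^ 2 - 4 * aC * wnorm h := by
    rw [hsqdef, Real.sq_sqrt hdisc.le, h84]
  have hsqlt : sq < Θ := by
    rw [hsqdef]
    have h1 : Θ ^ 2 - 8 * om * (2 * om + 4 * lam * om + ga) * wnorm h < Θ ^ 2 := by
      nlinarith
    calc Real.sqrt (Θ ^ 2 - 8 * om * (2 * om + 4 * lam * om + ga) * wnorm h)
        < Real.sqrt (Θ ^ 2) := Real.sqrt_lt_sqrt hdisc.le h1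
      _ = Θ := Real.sqrt_sq hΘ.le
  have hρ2 : 2 * aC * ρ = Θ - sq := by
    rw [hρ, h42]
    field_simp
  have hρpos : 0 < ρ := by nlinarith
  have hsqeq : sq = Θ - 2 * aC * ρ := by linarith
  rw [hsqeq] at hsq2
  have hfixρ : aC * ρ ^ 2 + wnorm h = Θ * ρ := by
    have h4 : (4 * aC) * (aC * ρ ^ 2 + wnorm h) = (4 * aC) * (Θ * ρ) := by
      linear_combination hsq2
    exact mul_left_cancel₀ (by positivity) h4
  have hself : ∀ T : ℝ, 0 ≤ T → T ≤ ρ → (aC * T ^ 2 + wnorm h) / Θ ≤ ρ := by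
    intro T h0 h1
    rw [div_le_iff₀ hΘ]
    have hTT : T ^ 2 ≤ ρ ^ 2 := by nlinarith
    nlinarith [mul_le_mul_of_nonneg_left hTT haC.le]
  have hq1 : 2 * aC * ρ / Θ < 1 := by
    rw [div_lt_one hΘ]
    nlinarith
  -- the ball in ℓ¹
  set s : Set (lp (fun _ : ℤ => ℂ) 1) := Metric.closedBall 0 ρ with hsdef
  haveI : CompleteSpace ↥s := (Metric.isClosed_closedBall).isComplete.completeSpace_coe
  haveI : Nonempty ↥s := ⟨⟨0, Metric.mem_closedBall_self hρpos.le⟩⟩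
  have memball : ∀ x : ↥s, ‖(↑x : lp (fun _ : ℤ => ℂ) 1)‖ ≤ ρ := fun x =>
    mem_closedBall_zero_iff.1 x.2
  have tsum_le_rho : ∀ x : ↥s, ∑' j, wt j * ‖fromL (↑x) j‖ ≤ ρ := by
    intro x
    rw [tsum_fromL]
    exact memball x
  let Tb : ↥s → ↥s := fun x =>
    ⟨toL (Rmap om lam ga p h (fromL ↑x))
        (Rmap_bound hom hlam hga hΘ hΘ1 hbound h (fromL ↑x) hh (summW_fromL ↑x)).1,
      by
        show _ ∈ Metric.closedBall (0 : lp (fun _ : ℤ => ℂ) 1) ρ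
        rw [mem_closedBall_zero_iff, norm_toL]
        refine le_trans
          (Rmap_bound hom hlam hga hΘ hΘ1 hbound h (fromL ↑x) hh (summW_fromL ↑x)).2 ?_
        exact hself _ (tsum_wt_nonneg _) (tsum_le_rho x)⟩
  have hlip : ∀ x y : ↥s, dist (Tb x) (Tb y) ≤ (2 * aC * ρ / Θ) * dist x y := by
    intro x y
    have hdxy : dist x y = ‖(↑x : lp (fun _ : ℤ => ℂ) 1) - ↑y‖ := by
      rw [Subtype.dist_eq, dist_eq_norm]
    have hTd : dist (Tb x) (Tb y) = ∑' k, wt k *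
        ‖Rmap om lam ga p h (fromL ↑x) k - Rmap om lam ga p h (fromL ↑y) k‖ := by
      rw [Subtype.dist_eq, dist_eq_norm]
      exact norm_toL_sub (Rmap om lam ga p h (fromL ↑x)) (Rmap om lam ga p h (fromL ↑y))
        (Rmap_bound hom hlam hga hΘ hΘ1 hbound h (fromL ↑x) hh (summW_fromL ↑x)).1
        (Rmap_bound hom hlam hga hΘ hΘ1 hbound h (fromL ↑y) hh (summW_fromL ↑y)).1
    obtain ⟨Sd, hd⟩ := Rdiff_est hom hlam hga hΘ hΘ1 hbound h (fromL ↑x) (fromL ↑y)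
      (summW_fromL ↑x) (summW_fromL ↑y)
    have hdist2 : ∑' j, wt j * ‖fromL (↑x) j - fromL (↑y) j‖ = dist x y := by
      rw [hdxy, ← tsum_fromL ((↑x : lp (fun _ : ℤ => ℂ) 1) - ↑y)]
      exact tsum_congr fun k => by rw [fromL_sub]
    have hTdnn : 0 ≤ ∑' j, wt j * ‖fromL (↑x) j - fromL (↑y) j‖ :=
      tsum_nonneg fun j => mul_nonneg (wt_pos j).le (norm_nonneg _)
    calc dist (Tb x) (Tb y)
        = ∑' k, wt k * ‖Rmap om lam ga p h (fromL ↑x) k - Rmap om lam ga p h (fromL ↑y) k‖ := hTd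
      _ ≤ (aC / Θ) * (((∑' j, wt j * ‖fromL (↑x) j‖)
            + ∑' j, wt j * ‖fromL (↑y) j‖) *
              ∑' j, wt j * ‖fromL (↑x) j - fromL (↑y) j‖) := hd
      _ ≤ (aC / Θ) * ((ρ + ρ) * ∑' j, wt j * ‖fromL (↑x) j - fromL (↑y) j‖) := by
          refine mul_le_mul_of_nonneg_left (mul_le_mul_of_nonneg_right ?_ hTdnn)
            (by positivity)
          exact add_le_add (tsum_le_rho x) (tsum_le_rho y)
      _ = (2 * aC * ρ / Θ) * ∑' j, wt j * ‖fromL (↑x) j - fromL (↑y) j‖ := by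
          ring
      _ = (2 * aC * ρ / Θ) * dist x y := by rw [hdist2]
  have hq0 : (0:ℝ) ≤ 2 * aC * ρ / Θ := by positivity
  have hqcoe : ((Real.toNNReal (2 * aC * ρ / Θ) : ℝ≥0) : ℝ) = 2 * aC * ρ / Θ :=
    Real.coe_toNNReal _ hq0
  have hcontr : ContractingWith (Real.toNNReal (2 * aC * ρ / Θ)) Tb := by
    constructor
    · have h1 : ((Real.toNNReal (2 * aC * ρ / Θ) : ℝ≥0) : ℝ) < 1 := by
        rw [hqcoe]; exact hq1
      exact_mod_cast h1
    · refine LipschitzWith.of_dist_le_mul fun x y => ?_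
      rw [hqcoe]
      exact hlip x y
  set xf : ↥s := ContractingWith.fixedPoint Tb hcontr with hxf
  have hfix : Tb xf = xf := hcontr.fixedPoint_isFixedPt
  set cs : ℤ → ℂ := fromL (↑xf) with hcs
  have Scs : Summable fun k => wt k * ‖cs k‖ := summW_fromL _
  have hRcs : Rmap om lam ga p h cs = cs := by
    have h1 : (↑(Tb xf) : lp (fun _ : ℤ => ℂ) 1) = ↑xf := congrArg Subtype.val hfix
    have h2 : toL (Rmap om lam ga p h cs)
        (Rmap_bound hom hlam hga hΘ hΘ1 hbound h cs hh Scs).1 = ↑xf := h1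
    calc Rmap om lam ga p h cs
        = fromL (toL (Rmap om lam ga p h cs)
            (Rmap_bound hom hlam hga hΘ hΘ1 hbound h cs hh Scs).1) :=
          (fromL_toL _ _).symm
      _ = fromL ↑xf := by rw [h2]
      _ = cs := rfl
  have hball_cs : ∑' k, wt k * ‖cs k‖ ≤ ρ := tsum_le_rho xf
  have heqn : ∀ k, msym om lam ga p k * cs k = Fcoef om lam ga p cs h k := by
    intro k
    have h1 : Rmap om lam ga p h cs k = cs k := congrFun hRcs k
    rw [← h1]
    show msym om lam ga p k * (Fcoef om lam ga p cs h k / msym om lam ga p k)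
      = Fcoef om lam ga p cs h k
    rw [mul_comm, div_mul_cancel₀ _ (msym_ne om lam ga p Θ hΘ hbound k)]
  refine ⟨⟨cs, ⟨(summW_iff cs).1 Scs, ?_, heqn⟩, ?_⟩, ?_, ?_⟩
  · rw [w2norm_eq cs ((summW_iff cs).1 Scs)]
    exact hball_cs
  · -- uniqueness
    rintro c' ⟨S'sq, hb', he'⟩
    have S' : Summable fun k => wt k * ‖c' k‖ := (summW_iff c').2 S'sq
    have hT' : ∑' k, wt k * ‖c' k‖ ≤ ρ := by
      rw [← w2norm_eq c' S'sq]; exact hb'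
    have hmem' : toL c' S' ∈ s := by
      show _ ∈ Metric.closedBall (0 : lp (fun _ : ℤ => ℂ) 1) ρ
      rw [mem_closedBall_zero_iff, norm_toL]; exact hT'
    have hRc' : ∀ k, Rmap om lam ga p h c' k = c' k := by
      intro k
      show Fcoef om lam ga p c' h k / msym om lam ga p k = c' k
      rw [← he' k, mul_comm, mul_div_assoc,
        div_self (msym_ne om lam ga p Θ hΘ hbound k), mul_one]
    have hfx' : Tb ⟨toL c' S', hmem'⟩ = ⟨toL c' S', hmem'⟩ := by
      apply Subtype.ext
      apply lp.ext
      funext k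
      show ((wt k : ℝ) : ℂ) * Rmap om lam ga p h (fromL (toL c' S')) k
        = ((wt k : ℝ) : ℂ) * c' k
      rw [fromL_toL c' S', hRc' k]
    have hx'eq : (⟨toL c' S', hmem'⟩ : ↥s) = xf := by
      rw [hxf]
      exact hcontr.fixedPoint_unique hfx'
    calc c' = fromL (toL c' S') := (fromL_toL c' S').symm
      _ = fromL ↑xf := congrArg (fun z : ↥s => fromL (↑z : lp (fun _ : ℤ => ℂ) 1)) hx'eq
      _ = cs := rfl
  · rw [h42]
    exact hq1
  · -- Lipschitz estimate for solutions
    intro c₁ c₂ d₁ d₂ S1sq S2sq hb1 hb2 Sd1 Sd2 he1 he2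
    have SW1 : Summable fun k => wt k * ‖c₁ k‖ := (summW_iff c₁).2 S1sq
    have SW2 : Summable fun k => wt k * ‖c₂ k‖ := (summW_iff c₂).2 S2sq
    have hd : (fun k => d₁ k - d₂ k)
        = fun k => Rmap om lam ga p h c₁ k - Rmap om lam ga p h c₂ k := by
      funext k
      have e1 : d₁ k = Rmap om lam ga p h c₁ k := by
        show d₁ k = Fcoef om lam ga p c₁ h k / msym om lam ga p k
        rw [← he1 k, mul_comm, mul_div_assoc,
          div_self (msym_ne om lam ga p Θ hΘ hbound k), mul_one]
      have e2 : d₂ k = Rmap om lam ga p h c₂ k := by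
        show d₂ k = Fcoef om lam ga p c₂ h k / msym om lam ga p k
        rw [← he2 k, mul_comm, mul_div_assoc,
          div_self (msym_ne om lam ga p Θ hΘ hbound k), mul_one]
      rw [e1, e2]
    obtain ⟨Sdd, hdle⟩ := Rdiff_est hom hlam hga hΘ hΘ1 hbound h c₁ c₂ SW1 SW2
    have hT1 : ∑' k, wt k * ‖c₁ k‖ ≤ ρ := by
      rw [← w2norm_eq c₁ S1sq]; exact hb1
    have hT2 : ∑' k, wt k * ‖c₂ k‖ ≤ ρ := by
      rw [← w2norm_eq c₂ S2sq]; exact hb2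
    have hTdnn : 0 ≤ ∑' j, wt j * ‖c₁ j - c₂ j‖ :=
      tsum_nonneg fun j => mul_nonneg (wt_pos j).le (norm_nonneg _)
    rw [hd, w2norm_eq _ ((summW_iff _).1 Sdd),
      w2norm_eq _ ((summW_iff _).1 (summW_sub SW1 SW2)), h42]
    calc ∑' k, wt k * ‖Rmap om lam ga p h c₁ k - Rmap om lam ga p h c₂ k‖
        ≤ (aC / Θ) * (((∑' k, wt k * ‖c₁ k‖)
            + ∑' k, wt k * ‖c₂ k‖) * ∑' j, wt j * ‖c₁ j - c₂ j‖) :=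
          hdle
      _ ≤ (aC / Θ) * ((ρ + ρ) * ∑' j, wt j * ‖c₁ j - c₂ j‖) := by
          refine mul_le_mul_of_nonneg_left (mul_le_mul_of_nonneg_right ?_ hTdnn)
            (by positivity)
          exact add_le_add hT1 hT2
      _ = (2 * aC * ρ / Θ) * ∑' j, wt j * ‖c₁ j - c₂ j‖ := by ring
end

section
/- (Lipschitz dependence on the forcing.) Under the hypotheses of Theorem 1, if h₁, h₂ ∈ X both satisfy 0 < ‖hᵢ‖ < Θ²/(8ω(2ω+4λω+γ)), then the corresponding unique small solutions satisfy ‖U(h₁) − U(h₂)‖₂ ≤ ‖h₁ − h₂‖ / √(Θ² − 8ω(2ω+4λω+γ)·max{‖h₁‖,‖h₂‖}). -/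
open Complex

namespace Stmt11Aux

lemma abs_int_le_sq (j : ℤ) : |(j:ℝ)| ≤ (j:ℝ)^2 := by
  rcases eq_or_ne j 0 with h|h
  · simp [h]
  · have h1 : (1:ℝ) ≤ |(j:ℝ)| := by
      have := Int.one_le_abs h
      calc (1:ℝ) = ((1:ℤ):ℝ) := by norm_num
        _ ≤ ((|j|:ℤ):ℝ) := by exact_mod_cast this
        _ = |(j:ℝ)| := by push_cast; ring
    nlinarith [abs_nonneg (j:ℝ), _root_.sq_abs (j:ℝ)]

lemma one_le_sq_of_ne {j : ℤ} (h : j ≠ 0) : (1:ℝ) ≤ (j:ℝ)^2 := by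
  have h1 : (1:ℝ) ≤ |(j:ℝ)| := by
    have := Int.one_le_abs h
    calc (1:ℝ) = ((1:ℤ):ℝ) := by norm_num
      _ ≤ ((|j|:ℤ):ℝ) := by exact_mod_cast this
      _ = |(j:ℝ)| := by push_cast; ring
  nlinarith [abs_nonneg (j:ℝ), _root_.sq_abs (j:ℝ)]

lemma summable_T1 {a : ℤ → ℂ} (h2 : Summable fun j : ℤ => (j:ℝ)^2 * ‖a j‖) :
    Summable fun j : ℤ => |(j:ℝ)| * ‖a j‖ := by
  refine Summable.of_nonneg_of_le (fun j : ℤ => by positivity) (fun j : ℤ => ?_) h2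
  exact mul_le_mul_of_nonneg_right (abs_int_le_sq j) (norm_nonneg _)

lemma summable_T0 {a : ℤ → ℂ} (h2 : Summable fun j : ℤ => (j:ℝ)^2 * ‖a j‖) :
    Summable fun j : ℤ => ‖a j‖ := by
  have hind : Summable (fun j : ℤ => if j = 0 then ‖a 0‖ else 0) :=
    (hasSum_ite_eq (0:ℤ) _).summable
  refine Summable.of_nonneg_of_le (fun j : ℤ => norm_nonneg _) (fun j : ℤ => ?_) (h2.add hind)
  rcases eq_or_ne j 0 with h|h
  · simp [h]
  · have h1 := one_le_sq_of_ne h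
    have h0 := norm_nonneg (a j)
    simp only [if_neg h]
    nlinarith

lemma abs_le_tsum {b : ℤ → ℂ} (hb : Summable fun j : ℤ => ‖b j‖) (m : ℤ) :
    ‖b m‖ ≤ ∑' j, ‖b j‖ :=
  Summable.le_tsum hb m (fun _ _ => norm_nonneg _)

lemma slice_summable {a b : ℤ → ℂ} (ha : Summable fun j : ℤ => ‖a j‖)
    (hb : Summable fun j : ℤ => ‖b j‖) (k : ℤ) :
    Summable fun j : ℤ => ‖a j‖ * ‖b (k - j)‖ := by
  refine Summable.of_nonneg_of_le (fun j : ℤ => by positivity) (fun j : ℤ => ?_)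
    (ha.mul_right (∑' j, ‖b j‖))
  exact mul_le_mul_of_nonneg_left (abs_le_tsum hb _) (norm_nonneg _)

lemma summable_conv_term {a b : ℤ → ℂ} (ha : Summable fun j : ℤ => ‖a j‖)
    (hb : Summable fun j : ℤ => ‖b j‖) (k : ℤ) :
    Summable fun j : ℤ => a j * b (k - j) := by
  refine Summable.of_norm ?_
  have := slice_summable ha hb k
  simpa [norm_mul] using this

lemma abs_fconv_le {a b : ℤ → ℂ} (ha : Summable fun j : ℤ => ‖a j‖)
    (hb : Summable fun j : ℤ => ‖b j‖) (k : ℤ) :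
    ‖fconv a b k‖ ≤ ∑' j, ‖a j‖ * ‖b (k - j)‖ := by
  have h' : Summable fun j : ℤ => ‖a j * b (k - j)‖ := by
    simpa [norm_mul] using slice_summable ha hb k
  have := norm_tsum_le_tsum_norm h'
  simpa [fconv, norm_mul] using this

lemma tsum_prod_mul {f g : ℤ → ℝ} (hf : Summable f) (hg : Summable g)
    (hf0 : ∀ i, 0 ≤ f i) (hg0 : ∀ i, 0 ≤ g i) :
    ∑' p : ℤ × ℤ, f p.1 * g p.2 = (∑' i, f i) * (∑' j, g j) := by
  have hs : Summable fun p : ℤ × ℤ => f p.1 * g p.2 := hf.mul_of_nonneg hg hf0 hg0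
  rw [Summable.tsum_prod' hs (fun b => hs.prod_factor b)]
  simp_rw [tsum_mul_left]
  rw [tsum_mul_right]

end Stmt11Aux

namespace Stmt11Aux

lemma w2norm_nonneg (a : ℤ → ℂ) : 0 ≤ w2norm a :=
  add_nonneg (norm_nonneg _) (tsum_nonneg fun j => by positivity)

lemma moment2_le (a : ℤ → ℂ) : ∑' j : ℤ, (j:ℝ)^2 * ‖a j‖ ≤ w2norm a :=
  le_add_of_nonneg_left (norm_nonneg _)

lemma moment1_le {a : ℤ → ℂ} (ha2 : Summable fun j : ℤ => (j:ℝ)^2 * ‖a j‖) :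
    ∑' j : ℤ, |(j:ℝ)| * ‖a j‖ ≤ w2norm a :=
  le_trans (Summable.tsum_le_tsum (fun j => mul_le_mul_of_nonneg_right (abs_int_le_sq j)
    (norm_nonneg _)) (summable_T1 ha2) ha2) (moment2_le a)

lemma moment0_le {a : ℤ → ℂ} (ha2 : Summable fun j : ℤ => (j:ℝ)^2 * ‖a j‖) :
    ∑' j : ℤ, ‖a j‖ ≤ w2norm a := by
  have h := Summable.tsum_eq_add_tsum_ite (summable_T0 ha2) 0
  have hvs : Summable fun j : ℤ => (if j = 0 then 0 else ‖a j‖) := by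
    refine Summable.of_nonneg_of_le (fun j => ?_) (fun j => ?_) (summable_T0 ha2)
    · split <;> simp [norm_nonneg]
    · split <;> simp [norm_nonneg]
  have hle : ∑' j : ℤ, (if j = 0 then 0 else ‖a j‖)
      ≤ ∑' j : ℤ, (j:ℝ)^2 * ‖a j‖ := by
    refine Summable.tsum_le_tsum (fun j => ?_) hvs ha2
    rcases eq_or_ne j 0 with hj|hj
    · simp [hj]
    · simp only [if_neg hj]
      have h1 := one_le_sq_of_ne hj
      have h0 := norm_nonneg (a j)
      nlinarith
  rw [w2norm]
  linarith

/-- weight function -/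
noncomputable def wt (x y : ℝ) (a b : ℤ → ℂ) (j m : ℤ) : ℝ :=
  (x * ((j:ℝ)^2 + 2 * |(j:ℝ)| *|(m:ℝ)| + (m:ℝ)^2) + y * (|(j:ℝ)| + |(m:ℝ)|)) *
    (‖a j‖ * ‖b m‖)

set_option maxHeartbeats 2000000 in
lemma conv_bound (x y : ℝ) (hx : 0 ≤ x) (hy : 0 ≤ y) (a b : ℤ → ℂ)
    (ha2 : Summable fun j : ℤ => (j:ℝ)^2 * ‖a j‖)
    (hb2 : Summable fun j : ℤ => (j:ℝ)^2 * ‖b j‖) :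
    ∃ H : ℤ → ℝ, (∀ k, 0 ≤ H k) ∧ Summable H ∧
      (∀ k : ℤ, (x*(k:ℝ)^2 + y*|(k:ℝ)|) * ‖fconv a b k‖ ≤ H k) ∧
      ∑' k, H k ≤ (4*x + 2*y) * w2norm a * w2norm b := by
  have ha1 := summable_T1 ha2
  have ha0 := summable_T0 ha2
  have hb1 := summable_T1 hb2
  have hb0 := summable_T0 hb2
  set A2 := ∑' j : ℤ, (j:ℝ)^2 * ‖a j‖ with hA2
  set A1 := ∑' j : ℤ, |(j:ℝ)| * ‖a j‖ with hA1
  set A0 := ∑' j : ℤ, ‖a j‖ with hA0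
  set B2 := ∑' j : ℤ, (j:ℝ)^2 * ‖b j‖ with hB2
  set B1 := ∑' j : ℤ, |(j:ℝ)| * ‖b j‖ with hB1
  set B0 := ∑' j : ℤ, ‖b j‖ with hB0
  -- the double-indexed majorant, in (j, m) coordinates
  set G : ℤ × ℤ → ℝ := fun q => wt x y a b q.1 q.2 with hG
  have hwt0 : ∀ j m : ℤ, 0 ≤ wt x y a b j m := by
    intro j m; unfold wt; positivity
  have hG0 : ∀ q, 0 ≤ G q := fun q => hwt0 _ _
  -- decomposition of G into 5 products
  have hGdec : ∀ q : ℤ × ℤ, G q =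
      (x * ((q.1:ℝ)^2 * ‖a q.1‖)) * ‖b q.2‖
      + (2*x * (|(q.1:ℝ)| * ‖a q.1‖)) * (|(q.2:ℝ)| * ‖b q.2‖)
      + ‖a q.1‖ * (x * ((q.2:ℝ)^2 * ‖b q.2‖))
      + (y * (|(q.1:ℝ)| * ‖a q.1‖)) * ‖b q.2‖
      + ‖a q.1‖ * (y * (|(q.2:ℝ)| * ‖b q.2‖)) := by
    intro q; unfold G; unfold wt; ring
  have hs1 : Summable fun q : ℤ × ℤ =>
      (x * ((q.1:ℝ)^2 * ‖a q.1‖)) * ‖b q.2‖ :=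
    ((ha2.mul_left x).mul_of_nonneg hb0 (fun j => by positivity)
      (fun j => norm_nonneg _))
  have hs2 : Summable fun q : ℤ × ℤ =>
      (2*x * (|(q.1:ℝ)| * ‖a q.1‖)) * (|(q.2:ℝ)| * ‖b q.2‖) :=
    ((ha1.mul_left (2*x)).mul_of_nonneg hb1 (fun j => by positivity) (fun j => by positivity))
  have hs3 : Summable fun q : ℤ × ℤ =>
      ‖a q.1‖ * (x * ((q.2:ℝ)^2 * ‖b q.2‖)) :=
    (ha0.mul_of_nonneg (hb2.mul_left x) (fun j => norm_nonneg _)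
      (fun j => by positivity))
  have hs4 : Summable fun q : ℤ × ℤ =>
      (y * (|(q.1:ℝ)| * ‖a q.1‖)) * ‖b q.2‖ :=
    ((ha1.mul_left y).mul_of_nonneg hb0 (fun j => by positivity)
      (fun j => norm_nonneg _))
  have hs5 : Summable fun q : ℤ × ℤ =>
      ‖a q.1‖ * (y * (|(q.2:ℝ)| * ‖b q.2‖)) :=
    (ha0.mul_of_nonneg (hb1.mul_left y) (fun j => norm_nonneg _)
      (fun j => by positivity))
  have hGsum : Summable G := by
    have := (((hs1.add hs2).add hs3).add hs4).add hs5
    exact this.congr (fun q => (hGdec q).symm)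
  have hGtsum : ∑' q, G q = (x * A2) * B0 + (2*x*A1) * B1 + A0 * (x * B2)
      + (y*A1) * B0 + A0 * (y*B1) := by
    calc ∑' q, G q
        = ∑' q : ℤ × ℤ, ((x * ((q.1:ℝ)^2 * ‖a q.1‖)) * ‖b q.2‖
          + (2*x * (|(q.1:ℝ)| * ‖a q.1‖)) * (|(q.2:ℝ)| * ‖b q.2‖)
          + ‖a q.1‖ * (x * ((q.2:ℝ)^2 * ‖b q.2‖))
          + (y * (|(q.1:ℝ)| * ‖a q.1‖)) * ‖b q.2‖
          + ‖a q.1‖ * (y * (|(q.2:ℝ)| * ‖b q.2‖))) :=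
          tsum_congr hGdec
      _ = (x * A2) * B0 + (2*x*A1) * B1 + A0 * (x * B2) + (y*A1) * B0 + A0 * (y*B1) := by
          rw [Summable.tsum_add (((hs1.add hs2).add hs3).add hs4) hs5,
            Summable.tsum_add ((hs1.add hs2).add hs3) hs4, Summable.tsum_add (hs1.add hs2) hs3,
            Summable.tsum_add hs1 hs2,
            tsum_prod_mul (ha2.mul_left x) hb0 (fun j => by positivity)
              (fun j => norm_nonneg _),
            tsum_prod_mul (ha1.mul_left (2*x)) hb1 (fun j => by positivity)
              (fun j => by positivity),
            tsum_prod_mul ha0 (hb2.mul_left x) (fun j => norm_nonneg _)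
              (fun j => by positivity),
            tsum_prod_mul (ha1.mul_left y) hb0 (fun j => by positivity)
              (fun j => norm_nonneg _),
            tsum_prod_mul ha0 (hb1.mul_left y) (fun j => norm_nonneg _)
              (fun j => by positivity),
            tsum_mul_left, tsum_mul_left, tsum_mul_left, tsum_mul_left, tsum_mul_left,
            ← hA2, ← hA1, ← hA0, ← hB2, ← hB1, ← hB0]
  -- change of coordinates: (k, j) ↦ (j, k - j)
  set e : ℤ × ℤ ≃ ℤ × ℤ :=
    ⟨fun p => (p.2, p.1 - p.2), fun q => (q.1 + q.2, q.1),
      fun p => by simp, fun q => by simp⟩ with he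
  have hG'sum : Summable fun p : ℤ × ℤ => G (e p) := (e.summable_iff).mpr hGsum
  have hG'0 : ∀ p, 0 ≤ G (e p) := fun p => hG0 _
  obtain ⟨hslice, hHsum⟩ := (summable_prod_of_nonneg (fun p => hG'0 p)).mp hG'sum
  refine ⟨fun k => ∑' j : ℤ, G (e (k, j)), fun k => tsum_nonneg (fun j => hG0 _), hHsum,
    ?_, ?_⟩
  · -- pointwise bound
    intro k
    have hfc := abs_fconv_le ha0 hb0 k
    have hc0 : 0 ≤ x*(k:ℝ)^2 + y*|(k:ℝ)| := by positivity
    calc (x*(k:ℝ)^2 + y*|(k:ℝ)|) * ‖fconv a b k‖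
        ≤ (x*(k:ℝ)^2 + y*|(k:ℝ)|) * ∑' j : ℤ, ‖a j‖ * ‖b (k - j)‖ :=
          mul_le_mul_of_nonneg_left hfc hc0
      _ = ∑' j : ℤ, (x*(k:ℝ)^2 + y*|(k:ℝ)|) * (‖a j‖ * ‖b (k - j)‖) :=
          tsum_mul_left.symm
      _ ≤ ∑' j : ℤ, G (e (k, j)) := by
          refine Summable.tsum_le_tsum (fun j => ?_) ((slice_summable ha0 hb0 k).mul_left _)
            (hslice k)
          show (x*(k:ℝ)^2 + y*|(k:ℝ)|) * (‖a j‖ * ‖b (k - j)‖)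
            ≤ wt x y a b j (k - j)
          unfold wt
          have hk : (k:ℝ) = (j:ℝ) + ((k - j : ℤ):ℝ) := by push_cast; ring
          set m : ℤ := k - j with hm
          have h1 : (k:ℝ)^2 ≤ (j:ℝ)^2 + 2 * |(j:ℝ)| *|(m:ℝ)| + (m:ℝ)^2 := by
            have habs : |(j:ℝ)*(m:ℝ)| = |(j:ℝ)| * |(m:ℝ)| := abs_mul _ _
            have hk2 : (k:ℝ)^2 = ((j:ℝ)+(m:ℝ))^2 := by rw [hk]
            rw [hk2]
            nlinarith [le_abs_self ((j:ℝ)*(m:ℝ))]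
          have h2 : |(k:ℝ)| ≤ |(j:ℝ)| + |(m:ℝ)| := by rw [hk]; exact abs_add_le _ _
          have h3 : 0 ≤ ‖a j‖ * ‖b m‖ := by positivity
          have h4 : x*(k:ℝ)^2 + y*|(k:ℝ)| ≤
              x * ((j:ℝ)^2 + 2 * |(j:ℝ)| *|(m:ℝ)| + (m:ℝ)^2) + y * (|(j:ℝ)| + |(m:ℝ)|) := by
            have := mul_le_mul_of_nonneg_left h1 hx
            have := mul_le_mul_of_nonneg_left h2 hy
            linarith
          exact mul_le_mul_of_nonneg_right h4 h3
  · -- total bound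
    have heq : ∑' k : ℤ, ∑' j : ℤ, G (e (k, j)) = ∑' q, G q := by
      rw [← e.tsum_eq G, Summable.tsum_prod' hG'sum (fun b => hG'sum.prod_factor b)]
    rw [heq, hGtsum]
    have hA2n : 0 ≤ A2 := tsum_nonneg (fun j => by positivity)
    have hA1n : 0 ≤ A1 := tsum_nonneg (fun j => by positivity)
    have hA0n : 0 ≤ A0 := tsum_nonneg (fun j => norm_nonneg _)
    have hB2n : 0 ≤ B2 := tsum_nonneg (fun j => by positivity)
    have hB1n : 0 ≤ B1 := tsum_nonneg (fun j => by positivity)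
    have hB0n : 0 ≤ B0 := tsum_nonneg (fun j => norm_nonneg _)
    have hA2w : A2 ≤ w2norm a := moment2_le a
    have hA1w : A1 ≤ w2norm a := moment1_le ha2
    have hA0w : A0 ≤ w2norm a := moment0_le ha2
    have hB2w : B2 ≤ w2norm b := moment2_le b
    have hB1w : B1 ≤ w2norm b := moment1_le hb2
    have hB0w : B0 ≤ w2norm b := moment0_le hb2
    have hWa : 0 ≤ w2norm a := w2norm_nonneg a
    have hWb : 0 ≤ w2norm b := w2norm_nonneg b
    have p1 : A2 * B0 ≤ w2norm a * w2norm b := mul_le_mul hA2w hB0w hB0n hWa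
    have p2 : A1 * B1 ≤ w2norm a * w2norm b := mul_le_mul hA1w hB1w hB1n hWa
    have p3 : A0 * B2 ≤ w2norm a * w2norm b := mul_le_mul hA0w hB2w hB2n hWa
    have p4 : A1 * B0 ≤ w2norm a * w2norm b := mul_le_mul hA1w hB0w hB0n hWa
    have p5 : A0 * B1 ≤ w2norm a * w2norm b := mul_le_mul hA0w hB1w hB1n hWa
    nlinarith [mul_le_mul_of_nonneg_left p1 hx, mul_le_mul_of_nonneg_left p2 hx,
      mul_le_mul_of_nonneg_left p3 hx, mul_le_mul_of_nonneg_left p4 hy,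
      mul_le_mul_of_nonneg_left p5 hy]

end Stmt11Aux

namespace Stmt11Aux

lemma msym_lower (om lam ga p Θ : ℝ) (hΘ : 0 < Θ)
    (hbound : ∀ k : ℤ, k ≠ 0 → Θ ≤ min 1
      (Real.sqrt ((1 / (k : ℝ) ^ 2 + om ^ 2 * (2 * lam * Real.cos (k * p) - 1)) ^ 2
        + ga ^ 2 * om ^ 2 / (k : ℝ) ^ 2)))
    (k : ℤ) (hk : k ≠ 0) : Θ * (k:ℝ)^2 ≤ ‖msym om lam ga p k‖ := by
  have hK0 : (k:ℝ) ≠ 0 := Int.cast_ne_zero.mpr hk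
  have hmeq : msym om lam ga p k =
      ((1 - om^2*(k:ℝ)^2 + 2*lam*om^2*(k:ℝ)^2*Real.cos ((k:ℝ)*p) : ℝ):ℂ)
        + ((ga*om*(k:ℝ) : ℝ):ℂ)*Complex.I := by
    rw [msym]
    push_cast
    ring
  have habs : ‖msym om lam ga p k‖ =
      Real.sqrt ((1 - om^2*(k:ℝ)^2 + 2*lam*om^2*(k:ℝ)^2*Real.cos ((k:ℝ)*p))^2
        + (ga*om*(k:ℝ))^2) := by
    rw [hmeq]; exact Complex.norm_add_mul_I _ _
  rw [habs]
  have hE : Θ^2 ≤ (1 / (k:ℝ) ^ 2 + om ^ 2 * (2 * lam * Real.cos ((k:ℝ) * p) - 1)) ^ 2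
      + ga ^ 2 * om ^ 2 / (k:ℝ) ^ 2 := by
    have h1 := (hbound k hk).trans (min_le_right _ _)
    have h2 : 0 ≤ (1 / (k:ℝ) ^ 2 + om ^ 2 * (2 * lam * Real.cos ((k:ℝ) * p) - 1)) ^ 2
        + ga ^ 2 * om ^ 2 / (k:ℝ) ^ 2 := by positivity
    nlinarith [Real.sq_sqrt h2]
  have hid : ((1 / (k:ℝ) ^ 2 + om ^ 2 * (2 * lam * Real.cos ((k:ℝ) * p) - 1)) ^ 2
      + ga ^ 2 * om ^ 2 / (k:ℝ) ^ 2) * (k:ℝ)^4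
      = (1 - om^2*(k:ℝ)^2 + 2*lam*om^2*(k:ℝ)^2*Real.cos ((k:ℝ)*p))^2 + (ga*om*(k:ℝ))^2 := by
    field_simp
    ring
  have hsq : (Θ * (k:ℝ)^2)^2 ≤
      (1 - om^2*(k:ℝ)^2 + 2*lam*om^2*(k:ℝ)^2*Real.cos ((k:ℝ)*p))^2 + (ga*om*(k:ℝ))^2 := by
    rw [← hid]
    have hK4 : (0:ℝ) ≤ (k:ℝ)^4 := by positivity
    have := mul_le_mul_of_nonneg_right hE hK4
    calc (Θ * (k:ℝ)^2)^2 = Θ^2 * (k:ℝ)^4 := by ring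
      _ ≤ _ := this
  have h0 : 0 ≤ Θ * (k:ℝ)^2 := by positivity
  exact (Real.le_sqrt h0 (by positivity)).mpr hsq

end Stmt11Aux
set_option maxHeartbeats 4000000

/-- Theorem 1, Lipschitz dependence on the forcing:
‖U(h₁) − U(h₂)‖₂ ≤ ‖h₁ − h₂‖ / √(Θ² − 8ω(2ω+4λω+γ)·max{‖h₁‖,‖h₂‖}). -/
theorem stmt_11 (om lam ga p Θ : ℝ) (hom : 0 < om) (hlam : 0 < lam) (hga : 0 ≤ ga)
    (hΘ : 0 < Θ)
    (hbound : ∀ k : ℤ, k ≠ 0 → Θ ≤ min 1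
      (Real.sqrt ((1 / (k : ℝ) ^ 2 + om ^ 2 * (2 * lam * Real.cos (k * p) - 1)) ^ 2
        + ga ^ 2 * om ^ 2 / (k : ℝ) ^ 2)))
    (h₁ h₂ : ℤ → ℂ)
    (hh₁ : Summable fun k : ℤ => ‖h₁ k‖)
    (hh₂ : Summable fun k : ℤ => ‖h₂ k‖)
    (hpos₁ : 0 < wnorm h₁)
    (hpos₂ : 0 < wnorm h₂)
    (hsmall₁ : wnorm h₁ < Θ ^ 2 / (8 * om * (2 * om + 4 * lam * om + ga)))
    (hsmall₂ : wnorm h₂ < Θ ^ 2 / (8 * om * (2 * om + 4 * lam * om + ga)))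
    (c₁ c₂ : ℤ → ℂ)
    (hc₁ : Summable fun k : ℤ => (k : ℝ) ^ 2 * ‖c₁ k‖)
    (hc₂ : Summable fun k : ℤ => (k : ℝ) ^ 2 * ‖c₂ k‖)
    (hball₁ : w2norm c₁ ≤
      (Θ - Real.sqrt (Θ ^ 2 - 8 * om * (2 * om + 4 * lam * om + ga) * wnorm h₁)) /
        (4 * om * (2 * om + 4 * lam * om + ga)))
    (hball₂ : w2norm c₂ ≤
      (Θ - Real.sqrt (Θ ^ 2 - 8 * om * (2 * om + 4 * lam * om + ga) * wnorm h₂)) /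
        (4 * om * (2 * om + 4 * lam * om + ga)))
    (hfix₁ : ∀ k : ℤ, msym om lam ga p k * c₁ k = Fcoef om lam ga p c₁ h₁ k)
    (hfix₂ : ∀ k : ℤ, msym om lam ga p k * c₂ k = Fcoef om lam ga p c₂ h₂ k) :
    w2norm (fun k => c₁ k - c₂ k) ≤
      wnorm (fun k => h₁ k - h₂ k) /
        Real.sqrt (Θ ^ 2 - 8 * om * (2 * om + 4 * lam * om + ga) *
          max (wnorm h₁) (wnorm h₂)) := by
  classical
  set d : ℤ → ℂ := fun k => c₁ k - c₂ k with hd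
  set Δ : ℤ → ℂ := fun k => h₁ k - h₂ k with hΔdef
  set x : ℝ := om^2*(1+2*lam) with hxdef
  set y : ℝ := ga*om with hydef
  have hx : 0 ≤ x := by rw [hxdef]; positivity
  have hy : 0 ≤ y := mul_nonneg hga hom.le
  -- summabilities
  have habs_sub : ∀ u v : ℂ, ‖u - v‖ ≤ ‖u‖ + ‖v‖ := by
    intro u v
    have := norm_sub_le u v
    simpa using this
  have hd2 : Summable fun k : ℤ => (k:ℝ)^2 * ‖d k‖ := by
    refine Summable.of_nonneg_of_le (fun k => by positivity) (fun k => ?_) (hc₁.add hc₂)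
    have h1 : ‖d k‖ ≤ ‖c₁ k‖ + ‖c₂ k‖ := habs_sub _ _
    have h2 : (0:ℝ) ≤ (k:ℝ)^2 := by positivity
    calc (k:ℝ)^2 * ‖d k‖ ≤ (k:ℝ)^2 * (‖c₁ k‖ + ‖c₂ k‖) :=
          mul_le_mul_of_nonneg_left h1 h2
      _ = (k:ℝ)^2 * ‖c₁ k‖ + (k:ℝ)^2 * ‖c₂ k‖ := by ring
  have hΔ0 : Summable fun k : ℤ => ‖Δ k‖ := by
    refine Summable.of_nonneg_of_le (fun k => norm_nonneg _)
      (fun k => habs_sub _ _) (hh₁.add hh₂)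
  have hc₁0 := Stmt11Aux.summable_T0 hc₁
  have hc₂0 := Stmt11Aux.summable_T0 hc₂
  have hd0 := Stmt11Aux.summable_T0 hd2
  -- the coefficient multiplying the nonlinearity
  set coef : ℤ → ℂ := fun k => -(om:ℂ)^2 * (-(k:ℂ)^2) *
      (1 - (lam:ℂ) * Complex.exp (-(Complex.I*(k:ℂ)*(p:ℂ)))
         - (lam:ℂ) * Complex.exp (Complex.I*(k:ℂ)*(p:ℂ)))
      - (ga:ℂ)*(om:ℂ)*(Complex.I*(k:ℂ)) with hcoef
  -- key fixed-point identity for the difference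
  have hkey : ∀ k : ℤ, msym om lam ga p k * d k
      = coef k * (fconv c₁ d k + fconv d c₂ k) + Δ k := by
    intro k
    have e₁ : fconv c₁ c₁ k - fconv c₁ c₂ k = fconv c₁ d k := by
      rw [fconv, fconv, fconv,
        ← Summable.tsum_sub (Stmt11Aux.summable_conv_term hc₁0 hc₁0 k)
          (Stmt11Aux.summable_conv_term hc₁0 hc₂0 k)]
      exact tsum_congr fun j => by simp only [hd]; ring
    have e₂ : fconv c₁ c₂ k - fconv c₂ c₂ k = fconv d c₂ k := by
      rw [fconv, fconv, fconv,
        ← Summable.tsum_sub (Stmt11Aux.summable_conv_term hc₁0 hc₂0 k)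
          (Stmt11Aux.summable_conv_term hc₂0 hc₂0 k)]
      exact tsum_congr fun j => by simp only [hd]; ring
    have hsub : msym om lam ga p k * d k
        = Fcoef om lam ga p c₁ h₁ k - Fcoef om lam ga p c₂ h₂ k := by
      simp only [hd]
      rw [mul_sub, hfix₁ k, hfix₂ k]
    have hdec : Fcoef om lam ga p c₁ h₁ k - Fcoef om lam ga p c₂ h₂ k
        = coef k * ((fconv c₁ c₁ k - fconv c₁ c₂ k) + (fconv c₁ c₂ k - fconv c₂ c₂ k)) + Δ k := by
      simp only [Fcoef, hcoef, hΔdef]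
      ring
    rw [hsub, hdec, e₁, e₂]
  -- bound on the coefficient
  have hcoefb : ∀ k : ℤ, ‖coef k‖ ≤ x*(k:ℝ)^2 + y*|(k:ℝ)| := by
    intro k
    have hexp1 : ‖Complex.exp (-(Complex.I*(k:ℂ)*(p:ℂ)))‖ = 1 := by
      rw [Complex.norm_exp]
      have : (-(Complex.I*(k:ℂ)*(p:ℂ))).re = 0 := by simp
      rw [this, Real.exp_zero]
    have hexp2 : ‖Complex.exp (Complex.I*(k:ℂ)*(p:ℂ))‖ = 1 := by
      rw [Complex.norm_exp]
      have : (Complex.I*(k:ℂ)*(p:ℂ)).re = 0 := by simp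
      rw [this, Real.exp_zero]
    have hbr : ‖1 - (lam:ℂ) * Complex.exp (-(Complex.I*(k:ℂ)*(p:ℂ)))
        - (lam:ℂ) * Complex.exp (Complex.I*(k:ℂ)*(p:ℂ))‖ ≤ 1 + 2*lam := by
      have t1 := habs_sub (1 - (lam:ℂ) * Complex.exp (-(Complex.I*(k:ℂ)*(p:ℂ))))
        ((lam:ℂ) * Complex.exp (Complex.I*(k:ℂ)*(p:ℂ)))
      have t2 := habs_sub (1:ℂ) ((lam:ℂ) * Complex.exp (-(Complex.I*(k:ℂ)*(p:ℂ))))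
      have hl : ‖(lam:ℂ)‖ = lam := by
        rw [Complex.norm_real, Real.norm_eq_abs]; exact abs_of_pos hlam
      rw [norm_mul, hexp2, hl] at t1
      rw [norm_mul, hexp1, hl] at t2
      simp only [norm_one] at t2
      linarith
    have hterm1 : ‖-(om:ℂ)^2 * (-(k:ℂ)^2) *
        (1 - (lam:ℂ) * Complex.exp (-(Complex.I*(k:ℂ)*(p:ℂ)))
           - (lam:ℂ) * Complex.exp (Complex.I*(k:ℂ)*(p:ℂ)))‖ ≤ om^2*(k:ℝ)^2*(1+2*lam) := by
      rw [norm_mul, norm_mul]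
      have h1 : ‖-(om:ℂ)^2‖ = om^2 := by
        rw [norm_neg, norm_pow, Complex.norm_real, Real.norm_eq_abs, abs_of_pos hom]
      have h2 : ‖-(k:ℂ)^2‖ = (k:ℝ)^2 := by
        rw [norm_neg, norm_pow, Complex.norm_intCast, _root_.sq_abs]
      rw [h1, h2]
      have h3 : (0:ℝ) ≤ om^2*(k:ℝ)^2 := by positivity
      calc om^2 * (k:ℝ)^2 * ‖_‖ ≤ om^2*(k:ℝ)^2 * (1+2*lam) := by
            exact mul_le_mul_of_nonneg_left hbr h3
        _ = om^2*(k:ℝ)^2*(1+2*lam) := by ring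
    have hterm2 : ‖(ga:ℂ)*(om:ℂ)*(Complex.I*(k:ℂ))‖ = ga*om*|(k:ℝ)| := by
      rw [norm_mul, norm_mul, norm_mul, Complex.norm_I, Complex.norm_intCast,
        Complex.norm_real, Complex.norm_real, Real.norm_eq_abs, Real.norm_eq_abs, _root_.abs_of_nonneg hga, _root_.abs_of_pos hom]
      ring
    have := (habs_sub (-(om:ℂ)^2 * (-(k:ℂ)^2) *
        (1 - (lam:ℂ) * Complex.exp (-(Complex.I*(k:ℂ)*(p:ℂ)))
           - (lam:ℂ) * Complex.exp (Complex.I*(k:ℂ)*(p:ℂ))))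
        ((ga:ℂ)*(om:ℂ)*(Complex.I*(k:ℂ))))
    rw [hcoef]
    rw [hterm2] at this
    calc ‖_‖ ≤ _ := this
      _ ≤ om^2*(k:ℝ)^2*(1+2*lam) + ga*om*|(k:ℝ)| := by linarith
      _ = x*(k:ℝ)^2 + y*|(k:ℝ)| := by rw [hxdef, hydef]; ring
  -- k = 0 data
  have hm0 : msym om lam ga p 0 = 1 := by
    rw [msym]
    norm_num
  have hc00 : coef 0 = 0 := by
    rw [hcoef]
    norm_num
  have hd00 : d 0 = Δ 0 := by
    have h := hkey 0
    rw [hm0, hc00] at h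
    simpa using h
  have hΘ1 : Θ ≤ 1 := (hbound 1 one_ne_zero).trans (min_le_left _ _)
  -- convolution majorants
  obtain ⟨H₁, hH₁0, hH₁s, hH₁b, hH₁t⟩ := Stmt11Aux.conv_bound x y hx hy c₁ d hc₁ hd2
  obtain ⟨H₂, hH₂0, hH₂s, hH₂b, hH₂t⟩ := Stmt11Aux.conv_bound x y hx hy d c₂ hd2 hc₂
  -- punctured forcing majorant
  set v : ℤ → ℝ := fun k => if k = 0 then 0 else ‖Δ k‖ with hv
  have hvs : Summable v := by
    refine Summable.of_nonneg_of_le (fun k => ?_) (fun k => ?_) hΔ0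
    · show (0:ℝ) ≤ if k = 0 then 0 else ‖Δ k‖
      split <;> simp [norm_nonneg]
    · show (if k = 0 then 0 else ‖Δ k‖) ≤ ‖Δ k‖
      split <;> simp [norm_nonneg]
  have hΔsplit : ∑' k : ℤ, ‖Δ k‖ = ‖Δ 0‖ + ∑' k, v k := by
    simpa [hv] using Summable.tsum_eq_add_tsum_ite hΔ0 0
  -- pointwise main bound
  have hptwise : ∀ k : ℤ, Θ * ((k:ℝ)^2 * ‖d k‖) ≤ H₁ k + H₂ k + v k := by
    intro k
    rcases eq_or_ne k 0 with hk|hk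
    · subst hk
      have : Θ * ((0:ℤ):ℝ)^2 * ‖d 0‖ = 0 := by norm_num
      have hnn : 0 ≤ H₁ 0 + H₂ 0 + v 0 := by
        have := hH₁0 0; have := hH₂0 0
        have hv0 : v 0 = 0 := by rw [hv]; simp
        linarith
      calc Θ * (((0:ℤ):ℝ)^2 * ‖d 0‖) = 0 := by norm_num
        _ ≤ H₁ 0 + H₂ 0 + v 0 := hnn
    · have hmlow := Stmt11Aux.msym_lower om lam ga p Θ hΘ hbound k hk
      have habsd : 0 ≤ ‖d k‖ := norm_nonneg _
      have hb1 : ‖coef k‖ * ‖fconv c₁ d k‖ ≤ H₁ k := by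
        refine le_trans (mul_le_mul_of_nonneg_right (hcoefb k) (norm_nonneg _)) ?_
        exact hH₁b k
      have hb2 : ‖coef k‖ * ‖fconv d c₂ k‖ ≤ H₂ k := by
        refine le_trans (mul_le_mul_of_nonneg_right (hcoefb k) (norm_nonneg _)) ?_
        exact hH₂b k
      have hvk : v k = ‖Δ k‖ := by rw [hv]; simp [hk]
      have t1 : ‖coef k * (fconv c₁ d k + fconv d c₂ k) + Δ k‖
          ≤ ‖coef k‖ * ‖fconv c₁ d k‖
            + ‖coef k‖ * ‖fconv d c₂ k‖ + ‖Δ k‖ := by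
        have u1 : ‖coef k * (fconv c₁ d k + fconv d c₂ k) + Δ k‖
            ≤ ‖coef k * (fconv c₁ d k + fconv d c₂ k)‖ + ‖Δ k‖ :=
          norm_add_le _ _
        have u2 : ‖fconv c₁ d k + fconv d c₂ k‖
            ≤ ‖fconv c₁ d k‖ + ‖fconv d c₂ k‖ :=
          norm_add_le _ _
        rw [norm_mul] at u1
        have u3 := mul_le_mul_of_nonneg_left u2 (norm_nonneg (coef k))
        calc ‖coef k * (fconv c₁ d k + fconv d c₂ k) + Δ k‖ ≤ _ := u1
          _ ≤ ‖coef k‖ * (‖fconv c₁ d k‖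
              + ‖fconv d c₂ k‖) + ‖Δ k‖ := by linarith
          _ = _ := by ring
      calc Θ * ((k:ℝ)^2 * ‖d k‖) = (Θ * (k:ℝ)^2) * ‖d k‖ := by ring
        _ ≤ ‖msym om lam ga p k‖ * ‖d k‖ :=
            mul_le_mul_of_nonneg_right hmlow habsd
        _ = ‖msym om lam ga p k * d k‖ := (norm_mul _ _).symm
        _ = ‖coef k * (fconv c₁ d k + fconv d c₂ k) + Δ k‖ := by rw [hkey k]
        _ ≤ ‖coef k‖ * ‖fconv c₁ d k‖
            + ‖coef k‖ * ‖fconv d c₂ k‖ + ‖Δ k‖ := t1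
        _ ≤ H₁ k + H₂ k + v k := by rw [hvk] at *; linarith
  -- sum the pointwise bounds
  have hmain0 : Θ * (∑' k : ℤ, (k:ℝ)^2 * ‖d k‖)
      ≤ (∑' k, H₁ k) + (∑' k, H₂ k) + (∑' k, v k) := by
    have hsL : Summable fun k : ℤ => Θ * ((k:ℝ)^2 * ‖d k‖) := hd2.mul_left Θ
    have hsR : Summable fun k : ℤ => H₁ k + H₂ k + v k := (hH₁s.add hH₂s).add hvs
    have := Summable.tsum_le_tsum hptwise hsL hsR
    rw [tsum_mul_left] at this
    rw [Summable.tsum_add (hH₁s.add hH₂s) hvs, Summable.tsum_add hH₁s hH₂s] at this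
    exact this
  -- assemble the master inequality
  have hWd0 : 0 ≤ w2norm d := Stmt11Aux.w2norm_nonneg d
  have hW₁0 : 0 ≤ w2norm c₁ := Stmt11Aux.w2norm_nonneg c₁
  have hW₂0 : 0 ≤ w2norm c₂ := Stmt11Aux.w2norm_nonneg c₂
  have hmaster : Θ * w2norm d ≤ (4*x+2*y) * (w2norm c₁ + w2norm c₂) * w2norm d
      + wnorm Δ := by
    have hΘd0 : Θ * ‖d 0‖ ≤ ‖Δ 0‖ := by
      rw [hd00]
      have := norm_nonneg (Δ 0)
      nlinarith
    have hH₁t' : (∑' k, H₁ k) ≤ (4*x+2*y) * w2norm c₁ * w2norm d := hH₁t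
    have hH₂t' : (∑' k, H₂ k) ≤ (4*x+2*y) * w2norm d * w2norm c₂ := hH₂t
    have hwn : wnorm Δ = ‖Δ 0‖ + ∑' k, v k := by
      rw [wnorm]; exact hΔsplit
    have hw2 : w2norm d = ‖d 0‖ + ∑' k : ℤ, (k:ℝ)^2 * ‖d k‖ := rfl
    rw [hw2] at hH₁t' hH₂t'
    rw [hw2, hwn]
    linarith [hmain0, hH₁t', hH₂t', hΘd0]
  -- real arithmetic conclusion
  have hden : (0:ℝ) < 2*om+4*lam*om+ga := by nlinarith
  have hD8 : (0:ℝ) < 8*om*(2*om+4*lam*om+ga) := by positivity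
  have hq₁ : 0 < Θ^2 - 8*om*(2*om+4*lam*om+ga) * wnorm h₁ := by
    rw [lt_div_iff₀ hD8] at hsmall₁
    nlinarith
  have hq₂ : 0 < Θ^2 - 8*om*(2*om+4*lam*om+ga) * wnorm h₂ := by
    rw [lt_div_iff₀ hD8] at hsmall₂
    nlinarith
  set s₁ : ℝ := Real.sqrt (Θ^2 - 8*om*(2*om+4*lam*om+ga) * wnorm h₁) with hs₁def
  set s₂ : ℝ := Real.sqrt (Θ^2 - 8*om*(2*om+4*lam*om+ga) * wnorm h₂) with hs₂def
  set s : ℝ := Real.sqrt (Θ^2 - 8*om*(2*om+4*lam*om+ga) * max (wnorm h₁) (wnorm h₂))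
    with hsdef
  have hqm : 0 < Θ^2 - 8*om*(2*om+4*lam*om+ga) * max (wnorm h₁) (wnorm h₂) := by
    rcases max_cases (wnorm h₁) (wnorm h₂) with ⟨hm, _⟩|⟨hm, _⟩ <;> rw [hm]
    · exact hq₁
    · exact hq₂
  have hspos : 0 < s := Real.sqrt_pos.mpr hqm
  have hss₁ : s ≤ s₁ := by
    apply Real.sqrt_le_sqrt
    have := le_max_left (wnorm h₁) (wnorm h₂)
    nlinarith
  have hss₂ : s ≤ s₂ := by
    apply Real.sqrt_le_sqrt
    have := le_max_right (wnorm h₁) (wnorm h₂)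
    nlinarith
  have hs₁sq : s₁^2 = Θ^2 - 8*om*(2*om+4*lam*om+ga) * wnorm h₁ := Real.sq_sqrt hq₁.le
  have hs₂sq : s₂^2 = Θ^2 - 8*om*(2*om+4*lam*om+ga) * wnorm h₂ := Real.sq_sqrt hq₂.le
  -- contraction constants
  have hA4 : (0:ℝ) < 4*om*(2*om+4*lam*om+ga) := by positivity
  have hball₁' : 4*om*(2*om+4*lam*om+ga) * w2norm c₁ ≤ Θ - s₁ := by
    rw [le_div_iff₀ hA4] at hball₁
    linarith
  have hball₂' : 4*om*(2*om+4*lam*om+ga) * w2norm c₂ ≤ Θ - s₂ := by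
    rw [le_div_iff₀ hA4] at hball₂
    linarith
  have h42A : 4*x+2*y = (4*om*(2*om+4*lam*om+ga))/2 := by
    rw [hxdef, hydef]; ring
  -- conclude
  rw [le_div_iff₀ hspos]
  have hfinal : s * w2norm d ≤ wnorm Δ := by
    have m1 := mul_le_mul_of_nonneg_right hball₁' hWd0
    have m2 := mul_le_mul_of_nonneg_right hball₂' hWd0
    have hs12 : (s₁ + s₂)/2 * w2norm d ≤ wnorm Δ := by
      rw [h42A] at hmaster
      nlinarith
    have : s * w2norm d ≤ (s₁+s₂)/2 * w2norm d := by
      have : s ≤ (s₁+s₂)/2 := by linarith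
      exact mul_le_mul_of_nonneg_right this hWd0
    linarith
  calc w2norm d * s = s * w2norm d := by ring
    _ ≤ wnorm Δ := hfinal
end

section
/- Let p ∈ πℚ with p = (p₁/p₂)π in lowest terms, λ, ω > 0 fixed, and suppose 0 ∉ 2λM₂ − 1. Then the number of positive resonant modes k₀ (solutions of ω²k₀²(1 − 2λcos(k₀p)) = 1 with k₀ > 0) is at most p₂ + 1; hence there are at most 2(p₂+1) resonant modes in ℤ∖{0}. -/
/-- M₂ = {cos(kπ/p₂) : k ∈ {0,…,2p₂−1}}. -/
def Mtwo (p₂ : ℕ) : Set ℝ :=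
  {x : ℝ | ∃ k : ℕ, k < 2 * p₂ ∧ x = Real.cos (k * Real.pi / p₂)}

open Real in
lemma cos_int_mem_Mtwo (p₂ : ℕ) (hp₂ : 0 < p₂) (m : ℤ) :
    Real.cos ((m : ℝ) * Real.pi / p₂) ∈ Mtwo p₂ := by
  have h2 : (0:ℤ) < 2 * p₂ := by positivity
  set n : ℤ := m % (2 * p₂) with hn
  have hn0 : 0 ≤ n := Int.emod_nonneg m (by omega)
  have hnlt : n < 2 * p₂ := Int.emod_lt_of_pos m h2
  refine ⟨n.toNat, by omega, ?_⟩
  have hmZ : m = n + (2 * p₂) * (m / (2 * (p₂:ℤ))) := (Int.emod_add_mul_ediv m (2 * p₂)).symm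
  have hm : (m : ℝ) = (n : ℝ) + (2 * p₂) * ((m / (2 * (p₂:ℤ)) : ℤ) : ℝ) := by
    exact_mod_cast congrArg (fun z : ℤ => (z : ℝ)) hmZ
  have hpne : (p₂ : ℝ) ≠ 0 := by positivity
  have key : (m : ℝ) * π / p₂ = (n : ℝ) * π / p₂ + ((m / (2 * (p₂:ℤ)) : ℤ) : ℝ) * (2 * π) := by
    rw [hm]; field_simp
  rw [key, Real.cos_add_int_mul_two_pi]
  congr 2
  rw [show ((n.toNat : ℕ) : ℝ) = ((n.toNat : ℤ) : ℝ) by push_cast; ring,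
    Int.toNat_of_nonneg hn0]

open Real in
lemma Mtwo_subset_image (p₂ : ℕ) (hp₂ : 0 < p₂) :
    Mtwo p₂ ⊆ ↑((Finset.range (p₂ + 1)).image (fun k : ℕ => Real.cos (k * π / p₂))) := by
  rintro x ⟨k, hk, rfl⟩
  simp only [Finset.coe_image, Set.mem_image, Finset.mem_coe, Finset.mem_range]
  by_cases h : k ≤ p₂
  · exact ⟨k, by omega, rfl⟩
  · refine ⟨2 * p₂ - k, by omega, ?_⟩
    have hpne : (p₂ : ℝ) ≠ 0 := by positivity
    have hcast : ((2 * p₂ - k : ℕ) : ℝ) = 2 * p₂ - k := by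
      push_cast [Nat.cast_sub (by omega : k ≤ 2 * p₂)]; ring
    have : ((2 * p₂ - k : ℕ) : ℝ) * π / p₂ = -((k : ℝ) * π / p₂) + 2 * π := by
      rw [hcast]; field_simp; ring
    rw [this, Real.cos_add_two_pi, Real.cos_neg]

/-- at most p₂ + 1 positive resonant modes, hence at most
2(p₂+1) resonant modes in ℤ∖{0}. -/
theorem stmt_15 (p₁ : ℤ) (p₂ : ℕ) (hp₂ : 0 < p₂) (hcop : Int.gcd p₁ (p₂ : ℤ) = 1)
    (p : ℝ) (hp : p = ((p₁ : ℝ) / (p₂ : ℝ)) * Real.pi)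
    (lam ω : ℝ) (hlam : 0 < lam) (hom : 0 < ω)
    (hM : ∀ x ∈ Mtwo p₂, 2 * lam * x - 1 ≠ 0) :
    ({k : ℤ | 0 < k ∧ ω ^ 2 * (k : ℝ) ^ 2 * (1 - 2 * lam * Real.cos (k * p)) = 1}.Finite ∧
     {k : ℤ | 0 < k ∧ ω ^ 2 * (k : ℝ) ^ 2 * (1 - 2 * lam * Real.cos (k * p)) = 1}.ncard ≤ p₂ + 1) ∧
    ({k : ℤ | k ≠ 0 ∧ ω ^ 2 * (k : ℝ) ^ 2 * (1 - 2 * lam * Real.cos (k * p)) = 1}.Finite ∧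
     {k : ℤ | k ≠ 0 ∧ ω ^ 2 * (k : ℝ) ^ 2 * (1 - 2 * lam * Real.cos (k * p)) = 1}.ncard ≤ 2 * (p₂ + 1)) := by
  have hpne : (p₂ : ℝ) ≠ 0 := by positivity
  set S₁ : Set ℤ :=
    {k : ℤ | 0 < k ∧ ω ^ 2 * (k : ℝ) ^ 2 * (1 - 2 * lam * Real.cos (k * p)) = 1} with hS₁
  set S₂ : Set ℤ :=
    {k : ℤ | k ≠ 0 ∧ ω ^ 2 * (k : ℝ) ^ 2 * (1 - 2 * lam * Real.cos (k * p)) = 1} with hS₂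
  set f : ℤ → ℝ := fun k => Real.cos ((k : ℝ) * p) with hf
  -- cos(k p) is in Mtwo
  have hcos : ∀ k : ℤ, f k ∈ Mtwo p₂ := by
    intro k
    have : (k : ℝ) * p = ((k * p₁ : ℤ) : ℝ) * Real.pi / p₂ := by
      rw [hp]; push_cast; field_simp
    rw [hf]; simp only []; rw [this]
    exact cos_int_mem_Mtwo p₂ hp₂ (k * p₁)
  -- injectivity on S₁
  have hinj : Set.InjOn f S₁ := by
    rintro k₁ ⟨hk₁, he₁⟩ k₂ ⟨hk₂, he₂⟩ hfk
    have hne : 1 - 2 * lam * f k₁ ≠ 0 := by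
      intro h
      exact hM _ (hcos k₁) (by linarith)
    have homne : ω ^ 2 ≠ 0 := by positivity
    have hsq : (k₁ : ℝ) ^ 2 = (k₂ : ℝ) ^ 2 := by
      have h : ω ^ 2 * (k₁ : ℝ) ^ 2 * (1 - 2 * lam * f k₁)
          = ω ^ 2 * (k₂ : ℝ) ^ 2 * (1 - 2 * lam * f k₁) := by
        rw [he₁]; rw [hfk]; rw [he₂]
      have h2 := mul_right_cancel₀ hne h
      have h3 : ω ^ 2 * (k₁ : ℝ) ^ 2 = ω ^ 2 * (k₂ : ℝ) ^ 2 := by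
        calc ω ^ 2 * (k₁ : ℝ) ^ 2 = ω ^ 2 * (k₁ : ℝ) ^ 2 := rfl
          _ = ω ^ 2 * (k₂ : ℝ) ^ 2 := h2
      exact mul_left_cancel₀ homne h3
    have h1 : (0:ℝ) ≤ (k₁ : ℝ) := by exact_mod_cast hk₁.le
    have h2 : (0:ℝ) ≤ (k₂ : ℝ) := by exact_mod_cast hk₂.le
    rw [sq, sq] at hsq
    exact_mod_cast (mul_self_inj h1 h2).mp hsq
  -- f '' S₁ is inside a finite set of card ≤ p₂ + 1
  set T : Finset ℝ := (Finset.range (p₂ + 1)).image (fun k : ℕ => Real.cos (k * Real.pi / p₂))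
    with hT
  have himgsub : f '' S₁ ⊆ ↑T := by
    rintro x ⟨k, _, rfl⟩
    exact Mtwo_subset_image p₂ hp₂ (hcos k)
  have himgfin : (f '' S₁).Finite := T.finite_toSet.subset himgsub
  have hfin₁ : S₁.Finite := Set.Finite.of_finite_image himgfin hinj
  have hcard₁ : S₁.ncard ≤ p₂ + 1 := by
    have h1 : S₁.ncard = (f '' S₁).ncard := (Set.ncard_image_of_injOn hinj).symm
    have h2 : (f '' S₁).ncard ≤ (↑T : Set ℝ).ncard :=
      Set.ncard_le_ncard himgsub T.finite_toSet
    have h3 : (↑T : Set ℝ).ncard = T.card := Set.ncard_coe_finset T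
    have h4 : T.card ≤ p₂ + 1 := by
      calc T.card ≤ (Finset.range (p₂ + 1)).card := Finset.card_image_le
        _ = p₂ + 1 := Finset.card_range _
    omega
  -- second part
  have hsub : S₂ ⊆ S₁ ∪ (fun k : ℤ => -k) '' S₁ := by
    rintro k ⟨hk, he⟩
    rcases lt_or_gt_of_ne hk with hneg | hpos
    · right
      refine ⟨-k, ⟨by omega, ?_⟩, by ring⟩
      have : ((-k : ℤ) : ℝ) = -(k : ℝ) := by push_cast; ring
      rw [this, neg_sq, neg_mul, Real.cos_neg]
      exact he
    · exact Or.inl ⟨hpos, he⟩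
  have hfin₂ : S₂.Finite := (hfin₁.union (hfin₁.image _)).subset hsub
  refine ⟨⟨hfin₁, hcard₁⟩, hfin₂, ?_⟩
  have h5 : S₂.ncard ≤ (S₁ ∪ (fun k : ℤ => -k) '' S₁).ncard :=
    Set.ncard_le_ncard hsub (hfin₁.union (hfin₁.image _))
  have h6 : (S₁ ∪ (fun k : ℤ => -k) '' S₁).ncard ≤ S₁.ncard + ((fun k : ℤ => -k) '' S₁).ncard :=
    Set.ncard_union_le _ _
  have h7 : ((fun k : ℤ => -k) '' S₁).ncard ≤ S₁.ncard := Set.ncard_image_le hfin₁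
  omega
end

section
/- Consider the same planar cubic system with c̃ ≠ 0 and assume instead 0 < ãd̃ − b̃c̃ < (ã+d̃)²/4 and ã + d̃ < 0. Then both roots q₁,₂ = ((ã−d̃) ± √((ã−d̃)² + 4b̃c̃))/(2c̃) are real and c̃q_i + d̃ = (ã + d̃ ± √((ã+d̃)² − 4(ãd̃−b̃c̃)))/2 < 0 for both signs, so the system has four distinct nontrivial solutions (q_i y_j, y_j) with y_j = ±√(−(c̃q_i + d̃)/(1+q_i²)), i, j ∈ {1,2}. If instead ã + d̃ > 0 (with the same inequality 0 < ãd̃ − b̃c̃ < (ã+d̃)²/4), the system has no nontrivial solution of the form x = q y with real q and y ≠ 0. -/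
set_option maxHeartbeats 1000000 in
/-- under 0 < ãd̃ − b̃c̃ < (ã+d̃)²/4, if ã+d̃ < 0 the planar cubic
system has four distinct nontrivial solutions (qᵢyⱼ, yⱼ); if ã+d̃ > 0 it has no
nontrivial solution of the form x = qy with y ≠ 0. -/
theorem stmt_18 (a b c d : ℝ) (hc : c ≠ 0) (h1 : 0 < a * d - b * c)
    (h2 : a * d - b * c < (a + d) ^ 2 / 4) :
    ∀ q₁ q₂ : ℝ,
      q₁ = ((a - d) + Real.sqrt ((a - d) ^ 2 + 4 * b * c)) / (2 * c) →
      q₂ = ((a - d) - Real.sqrt ((a - d) ^ 2 + 4 * b * c)) / (2 * c) →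
      ((a + d < 0 →
        c * q₁ + d = (a + d + Real.sqrt ((a + d) ^ 2 - 4 * (a * d - b * c))) / 2 ∧
        c * q₂ + d = (a + d - Real.sqrt ((a + d) ^ 2 - 4 * (a * d - b * c))) / 2 ∧
        c * q₁ + d < 0 ∧ c * q₂ + d < 0 ∧
        (∀ q : ℝ, (q = q₁ ∨ q = q₂) →
          ∀ y : ℝ,
            (y = Real.sqrt (-(c * q + d) / (1 + q ^ 2)) ∨
             y = -Real.sqrt (-(c * q + d) / (1 + q ^ 2))) →
            (a * (q * y) + b * y + (q * y) * ((q * y) ^ 2 + y ^ 2) = 0 ∧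
             c * (q * y) + d * y + y * ((q * y) ^ 2 + y ^ 2) = 0 ∧
             (q * y, y) ≠ ((0 : ℝ), (0 : ℝ)))) ∧
        (∀ y₁ y₂ : ℝ,
          y₁ = Real.sqrt (-(c * q₁ + d) / (1 + q₁ ^ 2)) →
          y₂ = Real.sqrt (-(c * q₂ + d) / (1 + q₂ ^ 2)) →
          ([(q₁ * y₁, y₁), (q₁ * (-y₁), -y₁), (q₂ * y₂, y₂), (q₂ * (-y₂), -y₂)] :
            List (ℝ × ℝ)).Pairwise (· ≠ ·))) ∧
       (0 < a + d →
        ∀ q y : ℝ, y ≠ 0 →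
          ¬(a * (q * y) + b * y + (q * y) * ((q * y) ^ 2 + y ^ 2) = 0 ∧
            c * (q * y) + d * y + y * ((q * y) ^ 2 + y ^ 2) = 0))) := by
  intro q₁ q₂ hq₁ hq₂
  have hD : (a + d) ^ 2 - 4 * (a * d - b * c) = (a - d) ^ 2 + 4 * b * c := by ring
  set s := Real.sqrt ((a - d) ^ 2 + 4 * b * c) with hs
  have hDpos : (0:ℝ) < (a - d) ^ 2 + 4 * b * c := by nlinarith
  have hs2 : s ^ 2 = (a - d) ^ 2 + 4 * b * c := Real.sq_sqrt hDpos.le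
  have hspos : 0 < s := Real.sqrt_pos.mpr hDpos
  have hslt : s ^ 2 < (a + d) ^ 2 := by nlinarith
  have hsq : Real.sqrt ((a + d) ^ 2 - 4 * (a * d - b * c)) = s := by rw [hD]
  have ht1 : c * q₁ + d = (a + d + s) / 2 := by rw [hq₁]; field_simp; ring
  have ht2 : c * q₂ + d = (a + d - s) / 2 := by rw [hq₂]; field_simp; ring
  have hroot : ∀ q : ℝ, q = q₁ ∨ q = q₂ → c * q ^ 2 - (a - d) * q - b = 0 := by
    rintro q (rfl | rfl)
    · rw [hq₁]; field_simp; linear_combination hs2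
    · rw [hq₂]; field_simp; linear_combination hs2
  have hq12 : q₁ ≠ q₂ := by
    rw [hq₁, hq₂]
    intro h
    field_simp at h
    nlinarith [hspos]
  constructor
  · intro hneg
    have hs_lt : s < -(a + d) := by nlinarith
    have hn1 : c * q₁ + d < 0 := by rw [ht1]; linarith
    have hn2 : c * q₂ + d < 0 := by rw [ht2]; linarith
    refine ⟨by rw [ht1, hsq], by rw [ht2, hsq], hn1, hn2, ?_, ?_⟩
    · rintro q hq y hy
      have hneg' : c * q + d < 0 := by rcases hq with rfl | rfl; exacts [hn1, hn2]
      have hden : (0:ℝ) < 1 + q ^ 2 := by positivity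
      have hv : 0 < -(c * q + d) / (1 + q ^ 2) := by
        apply div_pos (by linarith) hden
      have hsv : Real.sqrt (-(c * q + d) / (1 + q ^ 2)) ^ 2 = -(c * q + d) / (1 + q ^ 2) :=
        Real.sq_sqrt hv.le
      have hsp : 0 < Real.sqrt (-(c * q + d) / (1 + q ^ 2)) := Real.sqrt_pos.mpr hv
      have hy2 : y ^ 2 = -(c * q + d) / (1 + q ^ 2) := by
        rcases hy with rfl | rfl
        · exact hsv
        · rw [neg_sq]; exact hsv
      have hy2' : y ^ 2 * (1 + q ^ 2) + (c * q + d) = 0 := by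
        rw [hy2, div_mul_cancel₀ _ hden.ne']; ring
      have hy0 : y ≠ 0 := by
        rcases hy with rfl | rfl
        exacts [ne_of_gt hsp, ne_of_lt (neg_lt_zero.mpr hsp)]
      have hr := hroot q hq
      refine ⟨?_, ?_, ?_⟩
      · linear_combination q * y * hy2' - y * hr
      · linear_combination y * hy2'
      · simp [Prod.ext_iff, hy0]
    · intro y₁ y₂ hy₁ hy₂
      have hv1 : 0 < -(c * q₁ + d) / (1 + q₁ ^ 2) := by
        apply div_pos (by linarith) (by positivity)
      have hv2 : 0 < -(c * q₂ + d) / (1 + q₂ ^ 2) := by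
        apply div_pos (by linarith) (by positivity)
      have hy1p : 0 < y₁ := by rw [hy₁]; exact Real.sqrt_pos.mpr hv1
      have hy2p : 0 < y₂ := by rw [hy₂]; exact Real.sqrt_pos.mpr hv2
      have key12 : ∀ u v : ℝ, 0 < u → q₁ * u = q₂ * v → u = v → False := by
        intro u v hu h huv
        apply hq12
        have : q₁ * u = q₂ * u := by rw [huv] at h ⊢; exact h
        exact mul_right_cancel₀ hu.ne' this
      refine List.Pairwise.cons ?_ (List.Pairwise.cons ?_ (List.Pairwise.cons ?_ (by simp)))
      · intro p hp
        simp only [List.mem_cons, List.mem_singleton, List.not_mem_nil] at hp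
        rcases hp with rfl | rfl | rfl | h
        · intro h; apply absurd (congrArg Prod.snd h); simp; linarith
        · intro h
          exact key12 y₁ y₂ hy1p (congrArg Prod.fst h) (congrArg Prod.snd h)
        · intro h
          have := congrArg Prod.snd h; simp at this; linarith
        · exact absurd h (by simp)
      · intro p hp
        simp only [List.mem_cons, List.mem_singleton, List.not_mem_nil] at hp
        rcases hp with rfl | rfl | h
        · intro h
          have := congrArg Prod.snd h; simp at this; linarith
        · intro h
          have h1 := congrArg Prod.fst h
          have h2 := congrArg Prod.snd h
          simp at h1 h2
          apply key12 y₁ y₂ hy1p ?_ (by linarith)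
          linarith [h1]
        · exact absurd h (by simp)
      · intro p hp
        simp only [List.mem_singleton] at hp
        subst hp
        intro h
        have := congrArg Prod.snd h; simp at this; linarith
  · intro hpos q y hy
    rintro ⟨e1, e2⟩
    have h2' : c * q + d + y ^ 2 * (1 + q ^ 2) = 0 := by
      have hz : y * (c * q + d + y ^ 2 * (1 + q ^ 2)) = 0 := by linear_combination e2
      rcases mul_eq_zero.mp hz with h | h
      · exact absurd h hy
      · exact h
    have h3 : y * (c * q ^ 2 - (a - d) * q - b) = 0 := by
      linear_combination (-1) * e1 + q * y * h2'
    have hroot' : c * q ^ 2 - (a - d) * q - b = 0 := by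
      rcases mul_eq_zero.mp h3 with h | h
      · exact absurd h hy
      · exact h
    have hkey : (c * q + d) ^ 2 - (a + d) * (c * q + d) + (a * d - b * c) = 0 := by
      linear_combination c * hroot'
    have hy2pos : 0 < y ^ 2 := by positivity
    have hqq : 0 ≤ y ^ 2 * q ^ 2 := by positivity
    have htneg : c * q + d < 0 := by nlinarith [h2', hy2pos, hqq]
    have hprod : 0 < (a + d) * (-(c * q + d)) := mul_pos hpos (neg_pos.mpr htneg)
    obtain ⟨t, ht⟩ : ∃ t, t = c * q + d := ⟨_, rfl⟩
    rw [← ht] at hkey hprod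
    nlinarith [sq_nonneg t, hprod, hkey, h1]
end
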